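/- arXiv:2310.10231 — 4 statements merged into one kernel-verified Lean document; each statement's English description precedes it below -/
import Mathlib

section
/- (Theorem 5.1: moment-generating function.) Let z ∈ ℝ satisfy z ≠ 0, v₁z < ξ and v₂z < ξ. Then for every j ∈ {1,2} and every t > 0, e^{(v_jz − ξ)t}/(1 + λt) + ∫_{ℝ} e^{zx}·p̃(x,t|v_j) dx = e^{(v_jz − ξ)t}/(1 + λt) + (ξ/λ)·e^{(ξ − v_jz)/λ}·G_j(z,t) + λe^{−ξt}(e^{v₁zt} − e^{v₂zt})/(z(v₁−v₂)(1+λt)) + (ξ/(z(v₁−v₂)))·( e^{(ξ − v₁z)/λ}·G₁(z,t) − e^{(ξ − v₂z)/λ}·G₂(z,t) ), where G_k(z,t) = Γ(0, (ξ − v_kz)/λ, (ξ − v_kz)(1 + λt)/λ) for k = 1,2. The left-hand side is the moment-generating function at z of the reset telegraph process at time t, started at 0 with velocity v_j. -/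
open MeasureTheory Real Filter Topology Set

noncomputable section

namespace TelegraphReset

open Classical in
/-- Real-valued indicator of a proposition. -/
def ind (P : Prop) : ℝ := if P then 1 else 0

/-- Generalized incomplete gamma function `Γ(0, z₀, z₁) = ∫_{z₀}^{z₁} u⁻¹ e^{-u} du`. -/
def iGamma (z₀ z₁ : ℝ) : ℝ := ∫ u in z₀..z₁, u⁻¹ * Real.exp (-u)

/-- Upper incomplete gamma function `Γ(0, a) = ∫_a^∞ u⁻¹ e^{-u} du`. -/
def uGamma (a : ℝ) : ℝ := ∫ u in Set.Ioi a, u⁻¹ * Real.exp (-u)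

/-- `τ(x,t) = (x - v₂ t)/(v₁ - v₂)`. -/
def tauF (v₁ v₂ x t : ℝ) : ℝ := (x - v₂ * t) / (v₁ - v₂)

/-- The two velocities, indexed by `1` and `2`. -/
def vel (v₁ v₂ : ℝ) : ℕ → ℝ := fun n => if n = 1 then v₁ else v₂

/-- `Γ_λ^ξ(x,t)`, defined piecewise according to the sign of `v₂`. -/
def GamL (v₁ v₂ lam xi x t : ℝ) : ℝ :=
  if v₂ < 0 then iGamma ((max (x / v₁) (x / v₂) + 1 / lam) * xi) ((t + 1 / lam) * xi)
  else iGamma ((x / v₁ + 1 / lam) * xi) ((min (x / v₂) t + 1 / lam) * xi)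

/-- `Θ_λ^ξ(x,t)`, defined piecewise according to the sign of `v₂`. -/
def Theta (v₁ v₂ lam xi x t : ℝ) : ℝ :=
  if v₂ < 0 then
    Real.exp (-(xi * max (x / v₁) (x / v₂))) / (1 + lam * max (x / v₁) (x / v₂))
      - Real.exp (-(xi * t)) / (1 + lam * t)
  else
    Real.exp (-(xi * (x / v₁))) / (1 + lam * (x / v₁))
      - Real.exp (-(xi * min (x / v₂) t)) / (1 + lam * min (x / v₂) t)

/-- Closed-form sub-density `P_{j,j}(x,t)` (Eq. (21)). -/
def Pss (v₁ v₂ lam xi : ℝ) (j : ℕ) (x t : ℝ) : ℝ :=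
  ind (v₂ * t < x ∧ x < v₁ * t) * Real.exp (-(xi * t)) * lam ^ 2 *
      tauF v₁ v₂ x t ^ (2 - j) * (t - tauF v₁ v₂ x t) ^ (j - 1) /
      ((v₁ - v₂) * (1 + lam * t) ^ 2)
  + Real.sign (vel v₁ v₂ j) * ind (0 < x / vel v₁ v₂ j ∧ x / vel v₁ v₂ j < t) * xi *
      Real.exp (-(xi * (x / vel v₁ v₂ j))) / (vel v₁ v₂ j + lam * x)
  + ind (min (v₂ * t) 0 < x ∧ x < v₁ * t) *
      ((-1 : ℝ) ^ (3 - j) * (xi * (vel v₁ v₂ (3 - j) + lam * x) / (v₁ - v₂) ^ 2) *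
          Theta v₁ v₂ lam xi x t
        + (-1 : ℝ) ^ j * (xi * Real.exp (xi / lam) / (v₁ - v₂) ^ 2) *
            (vel v₁ v₂ (3 - j) * (lam + xi) / lam + x * xi) * GamL v₁ v₂ lam xi x t)

/-- Closed-form sub-density `P_{3-j,j}(x,t)` (Eq. (22)). -/
def Pos (v₁ v₂ lam xi : ℝ) (j : ℕ) (x t : ℝ) : ℝ :=
  ind (v₂ * t < x ∧ x < v₁ * t) * Real.exp (-(xi * t)) * lam *
      (1 + lam * tauF v₁ v₂ x t ^ (j - 1) * (t - tauF v₁ v₂ x t) ^ (2 - j)) /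
      ((v₁ - v₂) * (1 + lam * t) ^ 2)
  + ind (min (v₂ * t) 0 < x ∧ x < v₁ * t) *
      ((-1 : ℝ) ^ j * (xi * (vel v₁ v₂ (3 - j) + lam * x) / (v₁ - v₂) ^ 2) *
          Theta v₁ v₂ lam xi x t
        + (-1 : ℝ) ^ (3 - j) * (xi * Real.exp (xi / lam) / (v₁ - v₂) ^ 2) *
            (vel v₁ v₂ j * (lam + xi) / lam + x * xi
              + (-1 : ℝ) ^ j * xi * (v₁ - v₂) / lam) * GamL v₁ v₂ lam xi x t)

/-- Closed-form reset density `p̃(x,t|v_j)` (Eq. (37)). -/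
def pTil (v₁ v₂ lam xi : ℝ) (j : ℕ) (x t : ℝ) : ℝ :=
  Real.sign (vel v₁ v₂ j) * ind (0 < x / vel v₁ v₂ j ∧ x / vel v₁ v₂ j < t) * xi *
      Real.exp (-(xi * (x / vel v₁ v₂ j))) / (vel v₁ v₂ j + lam * x)
  + ind (v₂ * t < x ∧ x < v₁ * t) * lam * Real.exp (-(xi * t)) /
      ((v₁ - v₂) * (1 + lam * t))
  + ind (min (v₂ * t) 0 < x ∧ x < v₁ * t) *
      (xi * Real.exp (xi / lam) / (v₁ - v₂)) * GamL v₁ v₂ lam xi x t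

/-- First moment `E_j[X̃(t)]` (Eq. (54)). -/
def Emom (v₁ v₂ lam xi : ℝ) (j : ℕ) (t : ℝ) : ℝ :=
  (1 - Real.exp (-(xi * t))) *
      ((v₁ + v₂) / (2 * xi) + (vel v₁ v₂ j - vel v₁ v₂ (3 - j)) / (2 * lam))
  - xi * Real.exp (xi / lam) * (vel v₁ v₂ j - vel v₁ v₂ (3 - j)) / (2 * lam ^ 2) *
      iGamma (xi / lam) (xi / lam * (1 + lam * t))
  + t * Real.exp (-(xi * t)) * (vel v₁ v₂ j - vel v₁ v₂ (3 - j)) / (2 * (1 + lam * t))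

/-- Second moment `E_j[X̃²(t)]` (Eq. (55)). -/
def Smom (v₁ v₂ lam xi : ℝ) (j : ℕ) (t : ℝ) : ℝ :=
  (1 - Real.exp (-(xi * t))) *
      (2 * (v₁ ^ 2 + v₁ * v₂ + v₂ ^ 2) / (3 * xi ^ 2)
        + (2 * vel v₁ v₂ j ^ 2 - v₁ * v₂ - vel v₁ v₂ (3 - j) ^ 2) / (3 * lam) *
            (1 / xi - 1 / lam))
  - t * Real.exp (-(xi * t)) *
      (2 * (v₁ ^ 2 + v₁ * v₂ + v₂ ^ 2) / (3 * xi)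
        + (2 * vel v₁ v₂ j ^ 2 - v₁ * v₂ - vel v₁ v₂ (3 - j) ^ 2) /
            (3 * lam * (1 + lam * t)))
  + xi * Real.exp (xi / lam) *
      (2 * vel v₁ v₂ j ^ 2 - v₁ * v₂ - vel v₁ v₂ (3 - j) ^ 2) / (3 * lam ^ 3) *
      iGamma (xi / lam) (xi / lam * (1 + lam * t))

/-- First moment of the reset-free process. -/
def m1 (v₁ v₂ lam : ℝ) (j : ℕ) (t : ℝ) : ℝ :=
  (v₁ + v₂) * t / 2 + (vel v₁ v₂ j - vel v₁ v₂ (3 - j)) * t / (2 * (1 + lam * t))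

/-- Second moment of the reset-free process (Eq. (63)). -/
def m2 (v₁ v₂ lam : ℝ) (j : ℕ) (t : ℝ) : ℝ :=
  t ^ 2 * (3 * vel v₁ v₂ j ^ 2 + lam * t * (v₁ ^ 2 + v₁ * v₂ + v₂ ^ 2)) /
    (3 * (1 + lam * t))


lemma ind_of (P : Prop) (h : P) : ind P = 1 := by simp [ind, h]
lemma ind_not (P : Prop) (h : ¬P) : ind P = 0 := by simp [ind, h]

lemma ind_congr {P Q : Prop} (h : P ↔ Q) : ind P = ind Q := by
  by_cases hp : P
  · rw [ind_of _ hp, ind_of _ (h.mp hp)]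
  · rw [ind_not _ hp, ind_not _ (fun hq => hp (h.mpr hq))]

lemma integral_ind_Ioo (a b : ℝ) (f : ℝ → ℝ) :
    ∫ x : ℝ, ind (a < x ∧ x < b) * f x = ∫ x in Set.Ioo a b, f x := by
  rw [← MeasureTheory.integral_indicator measurableSet_Ioo]
  congr 1
  funext x
  by_cases h : a < x ∧ x < b
  · rw [ind_of _ h, Set.indicator_of_mem (by exact h), one_mul]
  · rw [ind_not _ h, Set.indicator_of_notMem (by exact h), zero_mul]

lemma setIoo_eq_ii (a b : ℝ) (h : a ≤ b) (f : ℝ → ℝ) :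
    ∫ x in Set.Ioo a b, f x = ∫ x in a..b, f x := by
  rw [intervalIntegral.integral_of_le h, MeasureTheory.integral_Ioc_eq_integral_Ioo]

lemma expInt (z a b : ℝ) (hz : z ≠ 0) :
    ∫ x in a..b, Real.exp (z*x) = (Real.exp (z*b) - Real.exp (z*a))/z := by
  rw [show (fun x => Real.exp (z*x)) = fun x => (fun u => Real.exp u) (z*x) from rfl,
    intervalIntegral.integral_comp_mul_left _ hz, integral_exp, smul_eq_mul]
  field_simp

lemma integrable_ind_Ioo (a b : ℝ) (f : ℝ → ℝ) (C : ℝ)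
    (hm : Measurable f) (hb : ∀ x ∈ Set.Ioo a b, |f x| ≤ C) :
    MeasureTheory.Integrable (fun x => ind (a < x ∧ x < b) * f x) := by
  have heq : (fun x => ind (a < x ∧ x < b) * f x) = Set.indicator (Set.Ioo a b) f := by
    funext x
    by_cases h : a < x ∧ x < b
    · rw [ind_of _ h, Set.indicator_of_mem (by exact h), one_mul]
    · rw [ind_not _ h, Set.indicator_of_notMem (by exact h), zero_mul]
  rw [heq, MeasureTheory.integrable_indicator_iff measurableSet_Ioo]
  apply MeasureTheory.Integrable.mono' (g := fun _ => C)
  · exact MeasureTheory.integrableOn_const measure_Ioo_lt_top.ne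
  · exact hm.aestronglyMeasurable.restrict
  · exact (MeasureTheory.ae_restrict_iff' measurableSet_Ioo).2 (Filter.Eventually.of_forall hb)

lemma keyInt (lam a t : ℝ) (hl : 0 < lam) (ha : a ≠ 0) :
    ∫ s in (0:ℝ)..t, Real.exp (-(a*s)) / (1+lam*s)
      = Real.exp (a/lam)/lam * iGamma (a/lam) (a*(1+lam*t)/lam) := by
  have hkey : ∀ s : ℝ, a/lam + a*s = a*(1+lam*s)/lam := by
    intro s; field_simp
  have hptw : ∀ s : ℝ, Real.exp (-(a*s)) / (1+lam*s)
      = Real.exp (a/lam)/lam * (a * ((a/lam + a*s)⁻¹ * Real.exp (-(a/lam + a*s)))) := by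
    intro s
    rw [hkey s]
    rcases eq_or_ne (1+lam*s) 0 with h | h
    · rw [h]; simp
    · have hE : Real.exp (a/lam) * Real.exp (-(a/lam)) = 1 := by
        rw [← Real.exp_add]; simp
      rw [inv_div, show -(a*(1+lam*s)/lam) = -(a*s) + -(a/lam) from by field_simp; ring,
        Real.exp_add, show Real.exp (-(a/lam)) = (Real.exp (a/lam))⁻¹ from Real.exp_neg _]
      field_simp
  have hcomp : (∫ s in (0:ℝ)..t, (fun u => u⁻¹ * Real.exp (-u)) (a/lam + a*s))
      = a⁻¹ • ∫ u in (a/lam + a*0)..(a/lam + a*t), u⁻¹ * Real.exp (-u) :=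
    intervalIntegral.integral_comp_add_mul (fun u => u⁻¹ * Real.exp (-u)) ha (a/lam)
  calc ∫ s in (0:ℝ)..t, Real.exp (-(a*s)) / (1+lam*s)
      = ∫ s in (0:ℝ)..t, (Real.exp (a/lam)/lam * a) *
          ((fun u => u⁻¹ * Real.exp (-u)) (a/lam + a*s)) := by
        apply intervalIntegral.integral_congr
        intro s _
        dsimp only
        rw [hptw s]; ring
    _ = (Real.exp (a/lam)/lam * a) * (a⁻¹ • ∫ u in (a/lam + a*0)..(a/lam + a*t),
          u⁻¹ * Real.exp (-u)) := by
        rw [intervalIntegral.integral_const_mul, hcomp]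
    _ = Real.exp (a/lam)/lam * iGamma (a/lam) (a*(1+lam*t)/lam) := by
        rw [smul_eq_mul, iGamma, show a/lam + a*0 = a/lam by ring,
          show a/lam + a*t = a*(1+lam*t)/lam from by field_simp]
        field_simp

lemma subMul (w t : ℝ) (hw : w ≠ 0) (h : ℝ → ℝ) :
    ∫ x in (0:ℝ)..(w*t), h x = w * ∫ s in (0:ℝ)..t, h (w*s) := by
  rw [intervalIntegral.integral_comp_mul_left h hw, smul_eq_mul, ← mul_assoc,
    mul_inv_cancel₀ hw, one_mul, mul_zero]

lemma termA (lam xi w z t : ℝ) (hl : 0 < lam) (hxi : 0 < xi) (hw : w ≠ 0)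
    (hwz : w*z < xi) (ht : 0 < t) :
    MeasureTheory.Integrable (fun x : ℝ => Real.exp (z*x) *
        (Real.sign w * ind (0 < x/w ∧ x/w < t) * xi *
          Real.exp (-(xi*(x/w))) / (w + lam*x))) ∧
    ∫ x : ℝ, Real.exp (z*x) * (Real.sign w * ind (0 < x/w ∧ x/w < t) * xi *
        Real.exp (-(xi*(x/w))) / (w + lam*x))
      = xi/lam * Real.exp ((xi - w*z)/lam) *
        iGamma ((xi - w*z)/lam) ((xi - w*z)*(1+lam*t)/lam) := by
  have hmf : Measurable (fun x : ℝ => xi * Real.exp (z*x) *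
      Real.exp (-(xi*(x/w))) / (w+lam*x)) :=
    ((((measurable_id.const_mul z).exp).const_mul xi).mul
      ((((measurable_id.div_const w).const_mul xi).neg).exp)).div
      ((measurable_id.const_mul lam).const_add w)
  have hwabs : 0 < |w| := abs_pos.2 hw
  have hbound : ∀ x : ℝ, |x| ≤ |w| * t → 0 ≤ x/w → |w| ≤ |w + lam*x| →
      |xi * Real.exp (z*x) * Real.exp (-(xi*(x/w))) / (w+lam*x)|
        ≤ xi * Real.exp (|z| * (|w| * t)) / |w| := by
    intro x hx1 hx2 hx3
    have he1 : Real.exp (z*x) ≤ Real.exp (|z| * (|w| * t)) := by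
      apply Real.exp_le_exp.2
      calc z*x ≤ |z*x| := le_abs_self _
        _ = |z| * |x| := abs_mul _ _
        _ ≤ |z| * (|w| * t) := by nlinarith [abs_nonneg z]
    have he2 : Real.exp (-(xi*(x/w))) ≤ 1 := Real.exp_le_one_iff.2 (by nlinarith)
    rw [abs_div, abs_of_pos (show (0:ℝ) < xi * Real.exp (z*x) * Real.exp (-(xi*(x/w)))
      by positivity)]
    apply div_le_div₀ (by positivity) _ hwabs hx3
    calc xi * Real.exp (z*x) * Real.exp (-(xi*(x/w)))
        ≤ xi * Real.exp (|z| * (|w| * t)) * 1 := by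
          apply mul_le_mul (mul_le_mul_of_nonneg_left he1 hxi.le) he2
            (Real.exp_pos _).le (by positivity)
      _ = xi * Real.exp (|z| * (|w| * t)) := mul_one _
  set a := xi - w*z with hadef
  have ha : 0 < a := by simp [hadef]; linarith
  have key0 : ∫ x in (0:ℝ)..(w*t), xi * Real.exp (z*x) * Real.exp (-(xi*(x/w))) / (w+lam*x)
      = xi/lam * Real.exp (a/lam) * iGamma (a/lam) (a*(1+lam*t)/lam) := by
    rw [subMul w t hw]
    have hptw : ∀ s : ℝ, xi * Real.exp (z*(w*s)) * Real.exp (-(xi*((w*s)/w))) / (w+lam*(w*s))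
        = xi * (Real.exp (-(a*s))/(1+lam*s)) / w := by
      intro s
      rw [mul_div_cancel_left₀ s hw, mul_assoc, ← Real.exp_add,
        show z*(w*s) + -(xi*s) = -(a*s) by simp [hadef]; ring,
        show w + lam*(w*s) = w*(1+lam*s) by ring]
      rcases eq_or_ne (1+lam*s) 0 with h | h
      · rw [h]; simp
      · field_simp
    rw [intervalIntegral.integral_congr (g := fun s => xi * (Real.exp (-(a*s))/(1+lam*s)) / w)
        (fun s _ => hptw s)]
    have : ∀ s:ℝ, xi * (Real.exp (-(a*s))/(1+lam*s)) / w
        = (xi/w) * (Real.exp (-(a*s))/(1+lam*s)) := fun s => by ring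
    rw [intervalIntegral.integral_congr (g := fun s => (xi/w) * (Real.exp (-(a*s))/(1+lam*s)))
        (fun s _ => this s), intervalIntegral.integral_const_mul, keyInt lam a t hl ha.ne']
    field_simp
  rcases hw.lt_or_gt with hw' | hw'
  · -- w < 0
    have hsgn : Real.sign w = -1 := Real.sign_of_neg hw'
    have hiff : ∀ x : ℝ, (0 < x/w ∧ x/w < t) ↔ (w*t < x ∧ x < 0) := by
      intro x
      constructor
      · rintro ⟨h1, h2⟩
        have hx : x < 0 := by
          by_contra hx
          push_neg at hx
          have : x/w ≤ 0 := div_nonpos_of_nonneg_of_nonpos hx hw'.le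
          linarith
        refine ⟨?_, hx⟩
        have := (div_lt_iff_of_neg hw').mp h2
        linarith [this]
      · rintro ⟨h1, h2⟩
        refine ⟨div_pos_of_neg_of_neg h2 hw', ?_⟩
        rw [div_lt_iff_of_neg hw']
        linarith
    have hrw : ∀ x : ℝ, Real.exp (z*x) * (Real.sign w * ind (0 < x/w ∧ x/w < t) * xi *
        Real.exp (-(xi*(x/w))) / (w + lam*x))
        = -(ind (w*t < x ∧ x < 0) * (xi * Real.exp (z*x) * Real.exp (-(xi*(x/w))) / (w+lam*x))) := by
      intro x
      rw [hsgn, ind_congr (hiff x)]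
      ring
    constructor
    · rw [show (fun x : ℝ => Real.exp (z*x) * (Real.sign w * ind (0 < x/w ∧ x/w < t) * xi *
          Real.exp (-(xi*(x/w))) / (w + lam*x)))
          = fun x : ℝ => -(ind (w*t < x ∧ x < 0) * (xi * Real.exp (z*x) *
            Real.exp (-(xi*(x/w))) / (w+lam*x))) from funext hrw]
      apply MeasureTheory.Integrable.neg
      apply integrable_ind_Ioo _ _ _ (xi * Real.exp (|z| * (|w| * t)) / |w|) hmf
      intro x hx
      obtain ⟨hx1, hx2⟩ := hx
      apply hbound
      · rw [abs_of_neg hx2, abs_of_neg hw']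
        nlinarith
      · exact le_of_lt (div_pos_of_neg_of_neg hx2 hw')
      · have hd : w + lam*x < 0 := by nlinarith
        rw [abs_of_neg hd, abs_of_neg hw']
        nlinarith
    calc ∫ x : ℝ, Real.exp (z*x) * (Real.sign w * ind (0 < x/w ∧ x/w < t) * xi *
          Real.exp (-(xi*(x/w))) / (w + lam*x))
        = ∫ x : ℝ, -(ind (w*t < x ∧ x < 0) * (xi * Real.exp (z*x) *
            Real.exp (-(xi*(x/w))) / (w+lam*x))) := by
          congr 1; funext x; exact hrw x
      _ = -∫ x : ℝ, ind (w*t < x ∧ x < 0) * (xi * Real.exp (z*x) *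
            Real.exp (-(xi*(x/w))) / (w+lam*x)) := integral_neg _
      _ = -∫ x in (w*t)..(0:ℝ), xi * Real.exp (z*x) * Real.exp (-(xi*(x/w))) / (w+lam*x) := by
          rw [integral_ind_Ioo, setIoo_eq_ii _ _ (by nlinarith)]
      _ = ∫ x in (0:ℝ)..(w*t), xi * Real.exp (z*x) * Real.exp (-(xi*(x/w))) / (w+lam*x) := by
          rw [intervalIntegral.integral_symm, neg_neg]
      _ = xi/lam * Real.exp ((xi - w*z)/lam) *
          iGamma ((xi - w*z)/lam) ((xi - w*z)*(1+lam*t)/lam) := key0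
  · -- w > 0
    have hsgn : Real.sign w = 1 := Real.sign_of_pos hw'
    have hiff : ∀ x : ℝ, (0 < x/w ∧ x/w < t) ↔ (0 < x ∧ x < w*t) := by
      intro x
      constructor
      · rintro ⟨h1, h2⟩
        have h3 := (div_lt_iff₀ hw').mp h2
        have h4 : 0 * w < x := (lt_div_iff₀ hw').mp h1
        exact ⟨by linarith, by linarith⟩
      · rintro ⟨h1, h2⟩
        exact ⟨div_pos h1 hw', by rw [div_lt_iff₀ hw']; linarith⟩
    have hrw : ∀ x : ℝ, Real.exp (z*x) * (Real.sign w * ind (0 < x/w ∧ x/w < t) * xi *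
        Real.exp (-(xi*(x/w))) / (w + lam*x))
        = ind (0 < x ∧ x < w*t) * (xi * Real.exp (z*x) * Real.exp (-(xi*(x/w))) / (w+lam*x)) := by
      intro x
      rw [hsgn, ind_congr (hiff x)]
      ring
    constructor
    · rw [show (fun x : ℝ => Real.exp (z*x) * (Real.sign w * ind (0 < x/w ∧ x/w < t) * xi *
          Real.exp (-(xi*(x/w))) / (w + lam*x)))
          = fun x : ℝ => ind (0 < x ∧ x < w*t) * (xi * Real.exp (z*x) *
            Real.exp (-(xi*(x/w))) / (w+lam*x)) from funext hrw]
      apply integrable_ind_Ioo _ _ _ (xi * Real.exp (|z| * (|w| * t)) / |w|) hmf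
      intro x hx
      obtain ⟨hx1, hx2⟩ := hx
      apply hbound
      · rw [abs_of_pos hx1, abs_of_pos hw']
        nlinarith
      · exact le_of_lt (div_pos hx1 hw')
      · have hd : 0 < w + lam*x := by nlinarith
        rw [abs_of_pos hd, abs_of_pos hw']
        nlinarith
    calc ∫ x : ℝ, Real.exp (z*x) * (Real.sign w * ind (0 < x/w ∧ x/w < t) * xi *
          Real.exp (-(xi*(x/w))) / (w + lam*x))
        = ∫ x : ℝ, ind (0 < x ∧ x < w*t) * (xi * Real.exp (z*x) *
            Real.exp (-(xi*(x/w))) / (w+lam*x)) := by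
          congr 1; funext x; exact hrw x
      _ = ∫ x in (0:ℝ)..(w*t), xi * Real.exp (z*x) * Real.exp (-(xi*(x/w))) / (w+lam*x) := by
          rw [integral_ind_Ioo, setIoo_eq_ii _ _ (by positivity)]
      _ = xi/lam * Real.exp ((xi - w*z)/lam) *
          iGamma ((xi - w*z)/lam) ((xi - w*z)*(1+lam*t)/lam) := key0

lemma termB (v₁ v₂ lam xi z t : ℝ) (hl : 0 < lam) (hv : v₂ < v₁) (hz : z ≠ 0) (ht : 0 < t) :
    MeasureTheory.Integrable (fun x : ℝ => Real.exp (z*x) *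
        (ind (v₂*t < x ∧ x < v₁*t) * lam * Real.exp (-(xi*t)) / ((v₁-v₂)*(1+lam*t)))) ∧
    ∫ x : ℝ, Real.exp (z*x) * (ind (v₂*t < x ∧ x < v₁*t) * lam * Real.exp (-(xi*t)) /
        ((v₁-v₂)*(1+lam*t)))
      = lam * Real.exp (-(xi*t)) * (Real.exp (v₁*z*t) - Real.exp (v₂*z*t)) /
        (z*(v₁-v₂)*(1+lam*t)) := by
  have h1 : (0:ℝ) < 1 + lam*t := by positivity
  have hvv : v₁ - v₂ ≠ 0 := sub_ne_zero.2 (ne_of_gt hv)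
  set cb : ℝ := lam * Real.exp (-(xi*t)) / ((v₁-v₂)*(1+lam*t)) with hcb
  have hrwB : ∀ x : ℝ, Real.exp (z*x) * (ind (v₂*t < x ∧ x < v₁*t) * lam *
      Real.exp (-(xi*t)) / ((v₁-v₂)*(1+lam*t)))
      = ind (v₂*t < x ∧ x < v₁*t) * (cb * Real.exp (z*x)) := by
    intro x; rw [hcb]; ring
  constructor
  · rw [show (fun x : ℝ => Real.exp (z*x) * (ind (v₂*t < x ∧ x < v₁*t) * lam *
        Real.exp (-(xi*t)) / ((v₁-v₂)*(1+lam*t))))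
        = fun x : ℝ => ind (v₂*t < x ∧ x < v₁*t) * (cb * Real.exp (z*x)) from funext hrwB]
    apply integrable_ind_Ioo _ _ _ (|cb| * Real.exp (|z| * ((|v₁| + |v₂|) * t)))
      (measurable_const.mul ((measurable_id.const_mul z).exp))
    intro x hx
    obtain ⟨hx1, hx2⟩ := hx
    have hxab : |x| ≤ (|v₁| + |v₂|) * t := by
      rw [abs_le]
      constructor
      · nlinarith [neg_abs_le v₂, abs_nonneg v₁, abs_nonneg v₂]
      · nlinarith [le_abs_self v₁, abs_nonneg v₁, abs_nonneg v₂]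
    show |cb * Real.exp (z*x)| ≤ _
    rw [abs_mul, abs_of_pos (Real.exp_pos _)]
    apply mul_le_mul_of_nonneg_left _ (abs_nonneg cb)
    apply Real.exp_le_exp.2
    calc z*x ≤ |z*x| := le_abs_self _
      _ = |z| * |x| := abs_mul _ _
      _ ≤ |z| * ((|v₁| + |v₂|) * t) := by nlinarith [abs_nonneg z]
  calc ∫ x : ℝ, Real.exp (z*x) * (ind (v₂*t < x ∧ x < v₁*t) * lam * Real.exp (-(xi*t)) /
          ((v₁-v₂)*(1+lam*t)))
      = ∫ x : ℝ, ind (v₂*t < x ∧ x < v₁*t) * (cb * Real.exp (z*x)) := by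
        congr 1; funext x; exact hrwB x
    _ = cb * ∫ x in (v₂*t)..(v₁*t), Real.exp (z*x) := by
        rw [integral_ind_Ioo, setIoo_eq_ii _ _ (by nlinarith),
          ← intervalIntegral.integral_const_mul]
    _ = lam * Real.exp (-(xi*t)) * (Real.exp (v₁*z*t) - Real.exp (v₂*z*t)) /
        (z*(v₁*t*0+(v₁-v₂))*(1+lam*t)) := by
        rw [expInt _ _ _ hz, show z*(v₁*t) = v₁*z*t by ring, show z*(v₂*t) = v₂*z*t by ring,
          hcb, div_mul_div_comm]
        ring
    _ = lam * Real.exp (-(xi*t)) * (Real.exp (v₁*z*t) - Real.exp (v₂*z*t)) /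
        (z*(v₁-v₂)*(1+lam*t)) := by norm_num

/-- auxiliary integrand -/
def gaux (lam xi s : ℝ) : ℝ := xi * ((xi*s + xi/lam)⁻¹ * Real.exp (-(xi*s + xi/lam)))

lemma gaux_meas (lam xi : ℝ) : Measurable (gaux lam xi) := by
  have hb : Measurable fun s : ℝ => xi*s + xi/lam := (measurable_id.const_mul xi).add_const _
  exact measurable_const.mul (hb.inv.mul (hb.neg.exp))

lemma gaux_bound (lam xi : ℝ) (hl : 0 < lam) (hxi : 0 < xi) :
    ∀ s : ℝ, 0 < s → |gaux lam xi s| ≤ lam := by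
  intro s hs
  have h1 : 0 < xi/lam := by positivity
  have h2 : xi/lam ≤ xi*s + xi/lam := by nlinarith
  have h3 : 0 < xi*s + xi/lam := by linarith
  have h4 : (xi*s + xi/lam)⁻¹ ≤ (xi/lam)⁻¹ := by
    exact inv_anti₀ h1 h2
  have h5 : Real.exp (-(xi*s + xi/lam)) ≤ 1 := Real.exp_le_one_iff.2 (by linarith)
  have h6 : 0 ≤ gaux lam xi s := by
    unfold gaux; positivity
  rw [abs_of_nonneg h6]
  unfold gaux
  calc xi * ((xi*s + xi/lam)⁻¹ * Real.exp (-(xi*s + xi/lam)))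
      ≤ xi * ((xi/lam)⁻¹ * 1) := by
        apply mul_le_mul_of_nonneg_left _ hxi.le
        apply mul_le_mul h4 h5 (Real.exp_pos _).le (by positivity)
    _ = lam := by field_simp
  
lemma gaux_eq (lam xi : ℝ) (hl : 0 < lam) (hxi : 0 < xi) (s : ℝ) :
    gaux lam xi s = lam * Real.exp (-(xi/lam)) * (Real.exp (-(xi*s))/(1+lam*s)) := by
  unfold gaux
  rcases eq_or_ne (1+lam*s) 0 with h | h
  · have h2 : xi*s + xi/lam = 0 := by
      have : xi*s + xi/lam = (xi/lam)*(1+lam*s) := by field_simp; ring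
      rw [this, h, mul_zero]
    rw [h2, h]
    simp
  · have h2 : xi*s + xi/lam ≠ 0 := by
      have heq : xi*s + xi/lam = (xi/lam)*(1+lam*s) := by field_simp; ring
      rw [heq]
      exact mul_ne_zero (by positivity) h
    have heq : xi*s + xi/lam = (xi/lam)*(1+lam*s) := by field_simp; ring
    rw [heq, mul_inv, show -((xi/lam)*(1+lam*s)) = -(xi*s) + -(xi/lam) from by field_simp; ring,
      Real.exp_add, show Real.exp (-(xi/lam)) = (Real.exp (xi/lam))⁻¹ from Real.exp_neg _]
    field_simp

lemma gamRepr (lam xi : ℝ) (hl : 0 < lam) (hxi : 0 < xi) (M T : ℝ) :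
    iGamma ((M + 1/lam)*xi) ((T + 1/lam)*xi) = ∫ s in M..T, gaux lam xi s := by
  have h1 : (M + 1/lam)*xi = xi*M + xi/lam := by field_simp
  have h2 : (T + 1/lam)*xi = xi*T + xi/lam := by field_simp
  rw [iGamma, h1, h2,
    ← intervalIntegral.smul_integral_comp_mul_add (fun u => u⁻¹ * Real.exp (-u)) xi (xi/lam),
    ← intervalIntegral.integral_smul]
  congr 1

set_option maxHeartbeats 2000000 in
lemma termC (v₁ v₂ lam xi z t : ℝ) (hl : 0 < lam) (hxi : 0 < xi)
    (hv : v₂ < v₁) (hv1 : 0 < v₁) (hv2 : v₂ ≠ 0)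
    (hz : z ≠ 0) (hz1 : v₁*z < xi) (hz2 : v₂*z < xi) (ht : 0 < t) :
    MeasureTheory.Integrable (fun x : ℝ => Real.exp (z*x) *
        (ind (min (v₂*t) 0 < x ∧ x < v₁*t) * (xi * Real.exp (xi/lam) / (v₁-v₂)) *
          GamL v₁ v₂ lam xi x t)) ∧
    ∫ x : ℝ, Real.exp (z*x) * (ind (min (v₂*t) 0 < x ∧ x < v₁*t) *
        (xi * Real.exp (xi/lam) / (v₁-v₂)) * GamL v₁ v₂ lam xi x t)
      = xi/(z*(v₁-v₂)) * (Real.exp ((xi - v₁*z)/lam) *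
          iGamma ((xi - v₁*z)/lam) ((xi - v₁*z)*(1+lam*t)/lam)
        - Real.exp ((xi - v₂*z)/lam) *
          iGamma ((xi - v₂*z)/lam) ((xi - v₂*z)*(1+lam*t)/lam)) := by
  have hvv : v₁ - v₂ ≠ 0 := sub_ne_zero.2 (ne_of_gt hv)
  set c : ℝ := xi * Real.exp (xi/lam) / (v₁-v₂) with hc_def
  set S : Set (ℝ×ℝ) := {q : ℝ×ℝ | (v₂*q.2 < q.1 ∧ q.1 < v₁*q.2) ∧ (0 < q.2 ∧ q.2 ≤ t)}
    with hS_def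
  set F : ℝ×ℝ → ℝ := S.indicator (fun q => c * Real.exp (z*q.1) * gaux lam xi q.2)
    with hF_def
  have hSm : MeasurableSet S := by
    have h1 : MeasurableSet {q : ℝ×ℝ | v₂*q.2 < q.1} :=
      measurableSet_lt (measurable_snd.const_mul v₂) measurable_fst
    have h2 : MeasurableSet {q : ℝ×ℝ | q.1 < v₁*q.2} :=
      measurableSet_lt measurable_fst (measurable_snd.const_mul v₁)
    have h3 : MeasurableSet {q : ℝ×ℝ | 0 < q.2} :=
      measurableSet_lt measurable_const measurable_snd
    have h4 : MeasurableSet {q : ℝ×ℝ | q.2 ≤ t} :=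
      measurableSet_le measurable_snd measurable_const
    exact (h1.inter h2).inter (h3.inter h4)
  have hfun : Measurable fun q : ℝ×ℝ => c * Real.exp (z*q.1) * gaux lam xi q.2 :=
    (measurable_const.mul ((measurable_fst.const_mul z).exp)).mul
      ((gaux_meas lam xi).comp measurable_snd)
  set K : ℝ := (|v₁| + |v₂|) * t with hK_def
  have hK0 : 0 ≤ K := by positivity
  have hsub : S ⊆ Set.Icc (-K) K ×ˢ Set.Icc 0 t := by
    rintro ⟨x, s⟩ ⟨⟨hx1, hx2⟩, hs1, hs2⟩
    have hb1 : x ≤ K := by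
      nlinarith [le_abs_self v₁, abs_nonneg v₁, abs_nonneg v₂]
    have hb2 : -K ≤ x := by
      nlinarith [neg_abs_le v₂, abs_nonneg v₁, abs_nonneg v₂]
    exact ⟨⟨hb2, hb1⟩, hs1.le, hs2⟩
  set C : ℝ := |c| * Real.exp (|z| * K) * lam with hC_def
  have hC0 : 0 ≤ C := by positivity
  have hF : MeasureTheory.Integrable F := by
    apply MeasureTheory.Integrable.mono'
      (g := (Set.Icc (-K) K ×ˢ Set.Icc 0 t).indicator (fun _ => C))
    · rw [MeasureTheory.integrable_indicator_iff (measurableSet_Icc.prod measurableSet_Icc)]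
      exact MeasureTheory.integrableOn_const
        (isCompact_Icc.prod isCompact_Icc).measure_lt_top.ne
    · exact (hfun.indicator hSm).aestronglyMeasurable
    · apply Filter.Eventually.of_forall
      intro q
      rw [Real.norm_eq_abs]
      by_cases hq : q ∈ S
      · rw [hF_def, Set.indicator_of_mem hq, Set.indicator_of_mem (hsub hq)]
        obtain ⟨⟨hx1, hx2⟩, hs1, hs2⟩ := hq
        have hq : q ∈ S := ⟨⟨hx1, hx2⟩, hs1, hs2⟩
        have hxK : |q.1| ≤ K := by
          have := hsub hq
          rw [Set.mem_prod, Set.mem_Icc] at this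
          exact abs_le.2 ⟨this.1.1, this.1.2⟩
        have he : Real.exp (z*q.1) ≤ Real.exp (|z| * K) := by
          apply Real.exp_le_exp.2
          calc z*q.1 ≤ |z*q.1| := le_abs_self _
            _ = |z| * |q.1| := abs_mul _ _
            _ ≤ |z| * K := by nlinarith [abs_nonneg z]
        calc |c * Real.exp (z*q.1) * gaux lam xi q.2|
            = |c| * Real.exp (z*q.1) * |gaux lam xi q.2| := by
              rw [abs_mul, abs_mul, abs_of_pos (Real.exp_pos _)]
          _ ≤ |c| * Real.exp (|z| * K) * lam := by
              apply mul_le_mul (mul_le_mul_of_nonneg_left he (abs_nonneg c))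
                (gaux_bound lam xi hl hxi q.2 hs1) (abs_nonneg _) (by positivity)
          _ = C := rfl
      · rw [hF_def, Set.indicator_of_notMem hq, abs_zero]
        exact Set.indicator_nonneg (fun _ _ => hC0) _
  -- the s-section set for fixed x
  have hTm : ∀ x : ℝ, MeasurableSet {s : ℝ | (v₂*s < x ∧ x < v₁*s) ∧ (0 < s ∧ s ≤ t)} := by
    intro x
    have h1 : MeasurableSet {s : ℝ | v₂*s < x} :=
      measurableSet_lt (measurable_id.const_mul v₂) measurable_const
    have h2 : MeasurableSet {s : ℝ | x < v₁*s} :=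
      measurableSet_lt measurable_const (measurable_id.const_mul v₁)
    have h3 : MeasurableSet {s : ℝ | 0 < s} := measurableSet_lt measurable_const measurable_id
    have h4 : MeasurableSet {s : ℝ | s ≤ t} := measurableSet_le measurable_id measurable_const
    exact (h1.inter h2).inter (h3.inter h4)
  have hslice : ∀ x : ℝ, (fun s => F (x, s)) =
      Set.indicator {s : ℝ | (v₂*s < x ∧ x < v₁*s) ∧ (0 < s ∧ s ≤ t)}
        (fun s => c * Real.exp (z*x) * gaux lam xi s) := by
    intro x; funext s
    by_cases hm : (v₂*s < x ∧ x < v₁*s) ∧ (0 < s ∧ s ≤ t)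
    · rw [hF_def, Set.indicator_of_mem (show (x,s) ∈ S from hm),
        Set.indicator_of_mem (show s ∈ {s : ℝ | (v₂*s < x ∧ x < v₁*s) ∧ (0 < s ∧ s ≤ t)} from hm)]
    · rw [hF_def, Set.indicator_of_notMem (show (x,s) ∉ S from hm),
        Set.indicator_of_notMem
          (show s ∉ {s : ℝ | (v₂*s < x ∧ x < v₁*s) ∧ (0 < s ∧ s ≤ t)} from hm)]
  have claim1 : ∀ x : ℝ, Real.exp (z*x) * (ind (min (v₂*t) 0 < x ∧ x < v₁*t) * c *
      GamL v₁ v₂ lam xi x t) = ∫ s : ℝ, F (x, s) := by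
    intro x
    rw [hslice x, MeasureTheory.integral_indicator (hTm x)]
    by_cases hcneg : v₂ < 0
    · have hmin : min (v₂*t) 0 = v₂*t := min_eq_left (by nlinarith)
      by_cases hx : v₂*t < x ∧ x < v₁*t
      · have hM1 : x/v₁ < t := by
          rw [div_lt_iff₀ hv1]; nlinarith [hx.2]
        have hM2 : x/v₂ < t := by
          rw [div_lt_iff_of_neg hcneg]; nlinarith [hx.1]
        have hMt : max (x/v₁) (x/v₂) < t := max_lt hM1 hM2
        have hM0 : 0 ≤ max (x/v₁) (x/v₂) := by
          rcases le_or_gt 0 x with h | h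
          · exact le_max_of_le_left (div_nonneg h hv1.le)
          · exact le_max_of_le_right (by rw [← neg_div_neg_eq]; exact div_nonneg (by linarith) (by linarith))
        have hTeq : {s : ℝ | (v₂*s < x ∧ x < v₁*s) ∧ (0 < s ∧ s ≤ t)}
            = Set.Ioc (max (x/v₁) (x/v₂)) t := by
          ext s
          simp only [Set.mem_setOf_eq, Set.mem_Ioc, max_lt_iff]
          constructor
          · rintro ⟨⟨h1, h2⟩, h3, h4⟩
            exact ⟨⟨(div_lt_iff₀ hv1).2 (by linarith), (div_lt_iff_of_neg hcneg).2 (by linarith)⟩, h4⟩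
          · rintro ⟨⟨h1, h2⟩, h4⟩
            have e1 : x < v₁*s := by nlinarith [(div_lt_iff₀ hv1).1 h1]
            have e2 : v₂*s < x := by nlinarith [(div_lt_iff_of_neg hcneg).1 h2]
            have e3 : 0 < s := lt_of_le_of_lt hM0 (max_lt h1 h2)
            exact ⟨⟨e2, e1⟩, e3, h4⟩
        rw [hTeq, ← intervalIntegral.integral_of_le hMt.le,
          intervalIntegral.integral_const_mul, hmin, ind_of _ hx, GamL, if_pos hcneg,
          gamRepr lam xi hl hxi]
        ring
      · rw [hmin, ind_not _ hx]
        have hTeq : {s : ℝ | (v₂*s < x ∧ x < v₁*s) ∧ (0 < s ∧ s ≤ t)} = ∅ := by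
          rw [Set.eq_empty_iff_forall_notMem]
          rintro s ⟨⟨h1, h2⟩, h3, h4⟩
          apply hx
          have e1 : v₂*t < x := by nlinarith [mul_nonneg (sub_nonneg.2 h4) (neg_pos.2 hcneg).le]
          have e2 : x < v₁*t := by nlinarith [mul_le_mul_of_nonneg_left h4 hv1.le]
          exact ⟨e1, e2⟩
        rw [hTeq]
        simp
    · have hcpos : 0 < v₂ := (hv2.lt_or_gt).resolve_left hcneg
      have hmin : min (v₂*t) 0 = 0 := min_eq_right (by positivity)
      by_cases hx : 0 < x ∧ x < v₁*t
      · have hxpos : 0 < x := hx.1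
        have hM1 : x/v₁ < x/v₂ := div_lt_div_of_pos_left hxpos hcpos hv
        have hM2 : x/v₁ < t := by rw [div_lt_iff₀ hv1]; nlinarith [hx.2]
        have hMpos : 0 < x/v₁ := div_pos hxpos hv1
        by_cases hu : x/v₂ ≤ t
        · have hTeq : {s : ℝ | (v₂*s < x ∧ x < v₁*s) ∧ (0 < s ∧ s ≤ t)}
              = Set.Ioo (x/v₁) (x/v₂) := by
            ext s
            simp only [Set.mem_setOf_eq, Set.mem_Ioo]
            constructor
            · rintro ⟨⟨h1, h2⟩, h3, h4⟩
              exact ⟨(div_lt_iff₀ hv1).2 (by linarith), (lt_div_iff₀ hcpos).2 (by linarith)⟩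
            · rintro ⟨h1, h2⟩
              refine ⟨⟨?_, ?_⟩, lt_trans hMpos h1, le_trans (le_of_lt h2) hu⟩
              · nlinarith [(lt_div_iff₀ hcpos).1 h2]
              · nlinarith [(div_lt_iff₀ hv1).1 h1]
          rw [hTeq, ← MeasureTheory.integral_Ioc_eq_integral_Ioo,
            ← intervalIntegral.integral_of_le hM1.le,
            intervalIntegral.integral_const_mul, hmin, ind_of _ hx, GamL, if_neg hcneg,
            min_eq_left hu, gamRepr lam xi hl hxi]
          ring
        · push_neg at hu
          have hTeq : {s : ℝ | (v₂*s < x ∧ x < v₁*s) ∧ (0 < s ∧ s ≤ t)}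
              = Set.Ioc (x/v₁) t := by
            ext s
            simp only [Set.mem_setOf_eq, Set.mem_Ioc]
            constructor
            · rintro ⟨⟨h1, h2⟩, h3, h4⟩
              exact ⟨(div_lt_iff₀ hv1).2 (by linarith), h4⟩
            · rintro ⟨h1, h2⟩
              have e2 : s < x/v₂ := lt_of_le_of_lt h2 hu
              refine ⟨⟨?_, ?_⟩, lt_trans hMpos h1, h2⟩
              · nlinarith [(lt_div_iff₀ hcpos).1 e2]
              · nlinarith [(div_lt_iff₀ hv1).1 h1]
          rw [hTeq, ← intervalIntegral.integral_of_le hM2.le,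
            intervalIntegral.integral_const_mul, hmin, ind_of _ hx, GamL, if_neg hcneg,
            min_eq_right hu.le, gamRepr lam xi hl hxi]
          ring
      · rw [hmin, ind_not _ hx]
        have hTeq : {s : ℝ | (v₂*s < x ∧ x < v₁*s) ∧ (0 < s ∧ s ≤ t)} = ∅ := by
          rw [Set.eq_empty_iff_forall_notMem]
          rintro s ⟨⟨h1, h2⟩, h3, h4⟩
          apply hx
          have e1 : 0 < x := lt_trans (by positivity) h1
          have e2 : x < v₁*t := by nlinarith [mul_le_mul_of_nonneg_left h4 hv1.le]
          exact ⟨e1, e2⟩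
        rw [hTeq]
        simp
  -- swap and inner x-integral
  have claim2 : ∀ s : ℝ, (∫ x : ℝ, F (x, s)) =
      Set.indicator (Set.Ioc 0 t)
        (fun s => c * gaux lam xi s * ((Real.exp (v₁*z*s) - Real.exp (v₂*z*s))/z)) s := by
    intro s
    by_cases hs : s ∈ Set.Ioc 0 t
    · obtain ⟨hs1, hs2⟩ := hs
      have hxeq : (fun x => F (x, s)) =
          Set.indicator (Set.Ioo (v₂*s) (v₁*s)) (fun x => (c * gaux lam xi s) * Real.exp (z*x)) := by
        funext x
        by_cases hm : x ∈ Set.Ioo (v₂*s) (v₁*s)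
        · rw [hF_def, Set.indicator_of_mem hm,
            Set.indicator_of_mem (show (x,s) ∈ S from ⟨⟨hm.1, hm.2⟩, hs1, hs2⟩)]
          ring
        · rw [hF_def, Set.indicator_of_notMem hm, Set.indicator_of_notMem
            (show (x,s) ∉ S from fun hmem => hm ⟨hmem.1.1, hmem.1.2⟩)]
      rw [hxeq, MeasureTheory.integral_indicator measurableSet_Ioo,
        Set.indicator_of_mem (show s ∈ Set.Ioc 0 t from ⟨hs1, hs2⟩),
        MeasureTheory.integral_const_mul,
        setIoo_eq_ii _ _ (by nlinarith) _, expInt _ _ _ hz,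
        show z*(v₁*s) = v₁*z*s by ring, show z*(v₂*s) = v₂*z*s by ring]
    · have hzero : ∀ x : ℝ, F (x, s) = 0 := by
        intro x
        rw [hF_def, Set.indicator_of_notMem (show (x,s) ∉ S from fun hmem => hs ⟨hmem.2.1, hmem.2.2⟩)]
      rw [Set.indicator_of_notMem hs]
      simp [hzero]
  have hfc : (fun x : ℝ => Real.exp (z*x) * (ind (min (v₂*t) 0 < x ∧ x < v₁*t) * c *
      GamL v₁ v₂ lam xi x t)) = fun x => ∫ s : ℝ, F (x, s) := funext claim1
  constructor
  · rw [hfc]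
    exact hF.integral_prod_left
  · rw [hfc]
    rw [MeasureTheory.integral_integral_swap (f := fun x s => F (x, s)) hF]
    calc ∫ s : ℝ, ∫ x : ℝ, F (x, s)
        = ∫ s : ℝ, Set.indicator (Set.Ioc 0 t)
            (fun s => c * gaux lam xi s * ((Real.exp (v₁*z*s) - Real.exp (v₂*z*s))/z)) s := by
          congr 1; funext s; exact claim2 s
      _ = ∫ s in (0:ℝ)..t, c * gaux lam xi s * ((Real.exp (v₁*z*s) - Real.exp (v₂*z*s))/z) := by
          rw [MeasureTheory.integral_indicator measurableSet_Ioc,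
            ← intervalIntegral.integral_of_le ht.le]
      _ = ∫ s in (0:ℝ)..t, ((c*lam*Real.exp (-(xi/lam))/z) * (Real.exp (-((xi-v₁*z)*s))/(1+lam*s))
            - (c*lam*Real.exp (-(xi/lam))/z) * (Real.exp (-((xi-v₂*z)*s))/(1+lam*s))) := by
          apply intervalIntegral.integral_congr
          intro s _
          dsimp only
          rw [gaux_eq lam xi hl hxi s]
          have e1 : Real.exp (-((xi-v₁*z)*s)) = Real.exp (v₁*z*s) * Real.exp (-(xi*s)) := by
            rw [← Real.exp_add]; congr 1; ring
          have e2 : Real.exp (-((xi-v₂*z)*s)) = Real.exp (v₂*z*s) * Real.exp (-(xi*s)) := by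
            rw [← Real.exp_add]; congr 1; ring
          rw [e1, e2]
          rcases eq_or_ne (1+lam*s) 0 with h | h
          · rw [h]; simp
          · field_simp
      _ = xi/(z*(v₁-v₂)) * (Real.exp ((xi - v₁*z)/lam) *
            iGamma ((xi - v₁*z)/lam) ((xi - v₁*z)*(1+lam*t)/lam)
          - Real.exp ((xi - v₂*z)/lam) *
            iGamma ((xi - v₂*z)/lam) ((xi - v₂*z)*(1+lam*t)/lam)) := by
          have ha1 : (0:ℝ) < xi - v₁*z := by linarith
          have ha2 : (0:ℝ) < xi - v₂*z := by linarith
          have hi1 : IntervalIntegrable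
              (fun s => (c*lam*Real.exp (-(xi/lam))/z) * (Real.exp (-((xi-v₁*z)*s))/(1+lam*s)))
              volume 0 t := by
            apply ContinuousOn.intervalIntegrable
            apply ContinuousOn.mul continuousOn_const
            apply ContinuousOn.div (Real.continuous_exp.comp (by fun_prop)).continuousOn
              (by fun_prop)
            intro s hs
            rw [Set.uIcc_of_le ht.le] at hs
            nlinarith [hs.1]
          have hi2 : IntervalIntegrable
              (fun s => (c*lam*Real.exp (-(xi/lam))/z) * (Real.exp (-((xi-v₂*z)*s))/(1+lam*s)))
              volume 0 t := by
            apply ContinuousOn.intervalIntegrable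
            apply ContinuousOn.mul continuousOn_const
            apply ContinuousOn.div (Real.continuous_exp.comp (by fun_prop)).continuousOn
              (by fun_prop)
            intro s hs
            rw [Set.uIcc_of_le ht.le] at hs
            nlinarith [hs.1]
          rw [intervalIntegral.integral_sub hi1 hi2, intervalIntegral.integral_const_mul,
            intervalIntegral.integral_const_mul, keyInt lam _ t hl ha1.ne',
            keyInt lam _ t hl ha2.ne', hc_def,
            show Real.exp (-(xi/lam)) = (Real.exp (xi/lam))⁻¹ from Real.exp_neg _]
          field_simp


set_option maxHeartbeats 1000000 in
/-- Theorem 5.1: the moment-generating function of the reset telegraph process. -/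
theorem mgf (v₁ v₂ lam xi : ℝ) (hlam : 0 < lam) (hxi : 0 < xi)
    (hv : v₂ < v₁) (hv1 : v₁ ≠ 0) (hv2 : v₂ ≠ 0)
    (hcase : (v₂ < 0 ∧ 0 < v₁) ∨ (0 < v₂ ∧ v₂ < v₁))
    (z : ℝ) (hz : z ≠ 0) (hz1 : v₁ * z < xi) (hz2 : v₂ * z < xi) :
    ∀ j : ℕ, (j = 1 ∨ j = 2) → ∀ t : ℝ, 0 < t →
      Real.exp ((vel v₁ v₂ j * z - xi) * t) / (1 + lam * t)
        + ∫ x : ℝ, Real.exp (z * x) * pTil v₁ v₂ lam xi j x t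
      = Real.exp ((vel v₁ v₂ j * z - xi) * t) / (1 + lam * t)
        + xi / lam * Real.exp ((xi - vel v₁ v₂ j * z) / lam) *
            iGamma ((xi - vel v₁ v₂ j * z) / lam)
              ((xi - vel v₁ v₂ j * z) * (1 + lam * t) / lam)
        + lam * Real.exp (-(xi * t)) *
            (Real.exp (v₁ * z * t) - Real.exp (v₂ * z * t)) /
            (z * (v₁ - v₂) * (1 + lam * t))
        + xi / (z * (v₁ - v₂)) *
            (Real.exp ((xi - v₁ * z) / lam) *
                iGamma ((xi - v₁ * z) / lam) ((xi - v₁ * z) * (1 + lam * t) / lam)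
              - Real.exp ((xi - v₂ * z) / lam) *
                  iGamma ((xi - v₂ * z) / lam)
                    ((xi - v₂ * z) * (1 + lam * t) / lam)) := by
  intro j hj t ht
  have hv1pos : 0 < v₁ := by
    rcases hcase with ⟨h1, h2⟩ | ⟨h1, h2⟩
    · exact h2
    · linarith
  have hw0 : vel v₁ v₂ j ≠ 0 := by
    rcases hj with h | h <;> subst h <;> simp [vel] <;> assumption
  have hwz : vel v₁ v₂ j * z < xi := by
    rcases hj with h | h <;> subst h <;> simpa [vel]
  obtain ⟨hIA, hA⟩ := termA lam xi (vel v₁ v₂ j) z t hlam hxi hw0 hwz ht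
  obtain ⟨hIB, hB⟩ := termB v₁ v₂ lam xi z t hlam hv hz ht
  obtain ⟨hIC, hC⟩ := termC v₁ v₂ lam xi z t hlam hxi hv hv1pos hv2 hz hz1 hz2 ht
  have hsplit : ∫ x : ℝ, Real.exp (z * x) * pTil v₁ v₂ lam xi j x t
      = (∫ x : ℝ, Real.exp (z*x) * (Real.sign (vel v₁ v₂ j) *
            ind (0 < x/(vel v₁ v₂ j) ∧ x/(vel v₁ v₂ j) < t) * xi *
            Real.exp (-(xi*(x/(vel v₁ v₂ j)))) / (vel v₁ v₂ j + lam*x)))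
        + ((∫ x : ℝ, Real.exp (z*x) * (ind (v₂*t < x ∧ x < v₁*t) * lam *
            Real.exp (-(xi*t)) / ((v₁-v₂)*(1+lam*t))))
        + (∫ x : ℝ, Real.exp (z*x) * (ind (min (v₂*t) 0 < x ∧ x < v₁*t) *
            (xi * Real.exp (xi/lam) / (v₁-v₂)) * GamL v₁ v₂ lam xi x t))) := by
    calc ∫ x : ℝ, Real.exp (z * x) * pTil v₁ v₂ lam xi j x t
        = ∫ x : ℝ, (Real.exp (z*x) * (Real.sign (vel v₁ v₂ j) *
              ind (0 < x/(vel v₁ v₂ j) ∧ x/(vel v₁ v₂ j) < t) * xi *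
              Real.exp (-(xi*(x/(vel v₁ v₂ j)))) / (vel v₁ v₂ j + lam*x))
            + (Real.exp (z*x) * (ind (v₂*t < x ∧ x < v₁*t) * lam *
              Real.exp (-(xi*t)) / ((v₁-v₂)*(1+lam*t)))
            + Real.exp (z*x) * (ind (min (v₂*t) 0 < x ∧ x < v₁*t) *
              (xi * Real.exp (xi/lam) / (v₁-v₂)) * GamL v₁ v₂ lam xi x t))) := by
          congr 1
          funext x
          simp only [pTil]
          ring
      _ = _ := by
          have hBC : MeasureTheory.Integrable (fun x : ℝ =>
              Real.exp (z*x) * (ind (v₂*t < x ∧ x < v₁*t) * lam *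
                Real.exp (-(xi*t)) / ((v₁-v₂)*(1+lam*t)))
              + Real.exp (z*x) * (ind (min (v₂*t) 0 < x ∧ x < v₁*t) *
                (xi * Real.exp (xi/lam) / (v₁-v₂)) * GamL v₁ v₂ lam xi x t)) := hIB.add hIC
          rw [MeasureTheory.integral_add hIA hBC, MeasureTheory.integral_add hIB hIC]
  rw [hsplit, hA, hB, hC]
  ring

end TelegraphReset
end
end

section
/- (Theorem 5.2, Eq. (55): second moment.) For every j ∈ {1,2} and every t > 0, (v_jt)²·e^{−ξt}/(1 + λt) + ∫_{ℝ} x²·p̃(x,t|v_j) dx = S_j(t), i.e. the second moment of the position of the reset telegraph process at time t, started at 0 with velocity v_j, equals (1 − e^{−ξt})·[ 2(v₁² + v₁v₂ + v₂²)/(3ξ²) + ((2v_j² − v₁v₂ − v_{j'}²)/(3λ))·(1/ξ − 1/λ) ] − t·e^{−ξt}·[ 2(v₁² + v₁v₂ + v₂²)/(3ξ) + (2v_j² − v₁v₂ − v_{j'}²)/(3λ(1+λt)) ] + (ξe^{ξ/λ}(2v_j² − v₁v₂ − v_{j'}²)/(3λ³))·Γ(0, ξ/λ, (ξ/λ)(1+λt)),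 where j' = 3 − j. -/
open MeasureTheory Real Filter Topology Set

noncomputable section

namespace TelegraphReset

/-! Auxiliary lemmas -/

lemma integral_poly_exp (xi : ℝ) (hxi : xi ≠ 0) (a b c t : ℝ) :
    ∫ s in (0:ℝ)..t, (a*s^2 + b*s + c) * Real.exp (-(xi*s))
      = -((a*t^2 + (b + 2*a/xi)*t + (c + b/xi + 2*a/xi^2))/xi) * Real.exp (-(xi*t))
        + (c + b/xi + 2*a/xi^2)/xi := by
  have hd : ∀ s ∈ Set.uIcc (0:ℝ) t,
      HasDerivAt (fun s => -((a*s^2 + (b + 2*a/xi)*s + (c + b/xi + 2*a/xi^2))/xi) *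
        Real.exp (-(xi*s))) ((a*s^2 + b*s + c) * Real.exp (-(xi*s))) s := by
    intro s _
    have h1 : HasDerivAt (fun s : ℝ => -(xi*s)) (-xi) s := by
      simpa using ((hasDerivAt_id s).const_mul xi).fun_neg
    have h2 := h1.exp
    have hp : HasDerivAt (fun s : ℝ => a*s^2 + (b + 2*a/xi)*s + (c + b/xi + 2*a/xi^2))
        (2*a*s + (b + 2*a/xi)) s := by
      have h := (((hasDerivAt_pow 2 s).const_mul a).add
        ((hasDerivAt_id s).const_mul (b + 2*a/xi))).add_const (c + b/xi + 2*a/xi^2)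
      refine h.congr_deriv ?_
      simp
      ring
    have h3 : HasDerivAt (fun s : ℝ =>
        -((a*s^2 + (b + 2*a/xi)*s + (c + b/xi + 2*a/xi^2))/xi))
        (-((2*a*s + (b + 2*a/xi))/xi)) s := by
      simpa [neg_div] using (hp.div_const xi).fun_neg
    have hmul := h3.mul h2
    refine hmul.congr_deriv ?_
    field_simp
    ring
  rw [intervalIntegral.integral_eq_sub_of_hasDerivAt hd
    (by apply Continuous.intervalIntegrable; continuity)]
  simp only [mul_zero, neg_zero, Real.exp_zero]
  ring

lemma integral_exp_div (lam xi t : ℝ) (hlam : 0 < lam) (hxi : 0 < xi) (ht : 0 < t) :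
    ∫ s in (0:ℝ)..t, Real.exp (-(xi*s)) / (1 + lam*s)
      = Real.exp (xi/lam)/lam * iGamma (xi/lam) (xi/lam*(1+lam*t)) := by
  have h := intervalIntegral.integral_comp_mul_add (a := (0:ℝ)) (b := t)
      (f := fun u => u⁻¹ * Real.exp (-u)) hxi.ne' (xi/lam)
  have e1 : xi * (0:ℝ) + xi/lam = xi/lam := by ring
  have e2 : xi * t + xi/lam = xi/lam*(1+lam*t) := by field_simp; ring
  rw [e1, e2] at h
  have h2 : iGamma (xi/lam) (xi/lam*(1+lam*t))
      = xi • ∫ s in (0:ℝ)..t, (xi*s + xi/lam)⁻¹ * Real.exp (-(xi*s + xi/lam)) := by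
    rw [iGamma, h, smul_smul, mul_inv_cancel₀ hxi.ne', one_smul]
  rw [h2, smul_eq_mul, ← intervalIntegral.integral_const_mul,
    ← intervalIntegral.integral_const_mul]
  apply intervalIntegral.integral_congr
  intro s hs
  rw [Set.uIcc_of_le ht.le] at hs
  have hs0 : 0 ≤ s := hs.1
  have hden : (0:ℝ) < 1 + lam*s := by nlinarith
  have hu : (0:ℝ) < xi*s + xi/lam := by
    have h1 : 0 ≤ xi*s := mul_nonneg hxi.le hs0
    have h22 : 0 < xi/lam := div_pos hxi hlam
    linarith
  simp only
  rw [show -(xi*s + xi/lam) = -(xi*s) + -(xi/lam) by ring, Real.exp_add,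
    Real.exp_neg (xi/lam)]
  have hex := Real.exp_ne_zero (xi/lam)
  field_simp
  ring

def gfun (lam xi s : ℝ) : ℝ := xi * ((xi*s + xi/lam)⁻¹ * Real.exp (-(xi*s + xi/lam)))

lemma iGamma_shift (lam xi : ℝ) (hxi : xi ≠ 0) (M T : ℝ) :
    iGamma ((M + 1/lam)*xi) ((T + 1/lam)*xi) = ∫ s in M..T, gfun lam xi s := by
  have h := intervalIntegral.integral_comp_mul_add (a := M) (b := T)
      (f := fun u => u⁻¹ * Real.exp (-u)) hxi (xi/lam)
  have e1 : xi * M + xi/lam = (M + 1/lam)*xi := by ring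
  have e2 : xi * T + xi/lam = (T + 1/lam)*xi := by ring
  rw [e1, e2] at h
  have h2 : iGamma ((M + 1/lam)*xi) ((T + 1/lam)*xi)
      = xi • ∫ s in M..T, (xi*s + xi/lam)⁻¹ * Real.exp (-(xi*s + xi/lam)) := by
    rw [iGamma, h, smul_smul, mul_inv_cancel₀ hxi, one_smul]
  rw [h2, smul_eq_mul, ← intervalIntegral.integral_const_mul]
  rfl

lemma cubic_div_integral (lam xi t n3 n2 : ℝ) (hlam : 0 < lam) (hxi : 0 < xi) (ht : 0 < t) :
    ∫ s in (0:ℝ)..t, (n3*s^3 + n2*s^2) * Real.exp (-(xi*s)) / (1+lam*s)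
      = (∫ s in (0:ℝ)..t, ((n3/lam)*s^2 + ((n2 - n3/lam)/lam)*s +
          (-((n2 - n3/lam)/lam)/lam)) * Real.exp (-(xi*s)))
        + ((n2 - n3/lam)/lam)/lam * ∫ s in (0:ℝ)..t, Real.exp (-(xi*s)) / (1+lam*s) := by
  have hpoly : IntervalIntegrable (fun s : ℝ => ((n3/lam)*s^2 + ((n2 - n3/lam)/lam)*s +
      (-((n2 - n3/lam)/lam)/lam)) * Real.exp (-(xi*s))) volume 0 t := by
    apply Continuous.intervalIntegrable
    continuity
  have hdiv : IntervalIntegrable (fun s : ℝ => ((n2 - n3/lam)/lam)/lam *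
      (Real.exp (-(xi*s)) / (1+lam*s))) volume 0 t := by
    apply ContinuousOn.intervalIntegrable
    apply ContinuousOn.mul continuousOn_const
    apply ContinuousOn.div
    · exact Continuous.continuousOn (by continuity)
    · exact Continuous.continuousOn (by continuity)
    · intro s hs
      rw [Set.uIcc_of_le ht.le] at hs
      have : 0 ≤ lam * s := mul_nonneg hlam.le hs.1
      intro hc
      linarith [hc]
  rw [← intervalIntegral.integral_const_mul, ← intervalIntegral.integral_add hpoly
    (by simpa using hdiv)]
  apply intervalIntegral.integral_congr
  intro s hs
  rw [Set.uIcc_of_le ht.le] at hs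
  have hden : (0:ℝ) < 1 + lam*s := by nlinarith [mul_nonneg hlam.le hs.1]
  have hden' : 1 + s*lam ≠ 0 := by rw [mul_comm]; exact hden.ne'
  field_simp
  ring


lemma pieceA (lam xi w t : ℝ) (hlam : 0 < lam) (hxi : 0 < xi) (ht : 0 < t) (hw : w ≠ 0) :
    Integrable (fun x : ℝ => x^2 * (Real.sign w * ind (0 < x / w ∧ x / w < t) * xi *
        Real.exp (-(xi * (x / w))) / (w + lam * x)))
    ∧ ∫ x : ℝ, x^2 * (Real.sign w * ind (0 < x / w ∧ x / w < t) * xi *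
        Real.exp (-(xi * (x / w))) / (w + lam * x))
      = ∫ s in (0:ℝ)..t, ((0:ℝ)*s^3 + xi*w^2*s^2) * Real.exp (-(xi*s)) / (1 + lam*s) := by
  rcases hw.lt_or_gt with hneg | hpos
  · -- w < 0
    have hsgn : Real.sign w = -1 := Real.sign_of_neg hneg
    have hiff : ∀ x : ℝ, (0 < x / w ∧ x / w < t) ↔ x ∈ Set.Ioo (w*t) (0:ℝ) := fun x => by
      rw [Set.mem_Ioo, lt_div_iff_of_neg hneg, div_lt_iff_of_neg hneg, zero_mul,
        mul_comm t w, and_comm]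
    have hfun : (fun x : ℝ => x^2 * (Real.sign w * ind (0 < x / w ∧ x / w < t) * xi *
        Real.exp (-(xi * (x / w))) / (w + lam * x)))
        = fun x => -((Set.Ioo (w*t) (0:ℝ)).indicator
            (fun x => x^2 * (xi * Real.exp (-(xi * (x / w))) / (w + lam * x))) x) := by
      funext x
      by_cases hx : x ∈ Set.Ioo (w*t) (0:ℝ)
      · rw [Set.indicator_of_mem hx, hsgn]
        simp only [ind, if_pos ((hiff x).mpr hx)]
        ring
      · rw [Set.indicator_of_notMem hx, hsgn]
        simp only [ind, if_neg (fun hc => hx ((hiff x).mp hc))]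
        ring
    have hwt : w*t ≤ 0 := by nlinarith
    have hcont : ContinuousOn (fun x : ℝ => x^2 * (xi * Real.exp (-(xi * (x / w))) /
        (w + lam * x))) (Set.Icc (w*t) 0) := by
      apply ContinuousOn.mul (Continuous.continuousOn (by fun_prop))
      apply ContinuousOn.div (Continuous.continuousOn (by fun_prop))
        (Continuous.continuousOn (by fun_prop))
      intro x hx
      have h1 : lam * x ≤ 0 := mul_nonpos_of_nonneg_of_nonpos hlam.le hx.2
      intro hc; linarith
    constructor
    · rw [hfun]
      apply Integrable.neg
      apply MeasureTheory.IntegrableOn.integrable_indicator _ measurableSet_Ioo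
      exact MeasureTheory.IntegrableOn.mono_set (ContinuousOn.integrableOn_Icc hcont)
        Set.Ioo_subset_Icc_self
    · rw [hfun, MeasureTheory.integral_neg,
        MeasureTheory.integral_indicator measurableSet_Ioo,
        ← MeasureTheory.integral_Ioc_eq_integral_Ioo,
        ← intervalIntegral.integral_of_le hwt,
        intervalIntegral.integral_symm]
      have hsub := intervalIntegral.smul_integral_comp_mul_left (a := (0:ℝ)) (b := t)
        (f := fun x => x^2 * (xi * Real.exp (-(xi * (x / w))) / (w + lam * x))) w
      rw [mul_zero] at hsub
      rw [neg_neg, ← hsub, smul_eq_mul, ← intervalIntegral.integral_const_mul]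
      apply intervalIntegral.integral_congr
      intro s hs
      rw [Set.uIcc_of_le ht.le] at hs
      have hs0 : 0 ≤ s := hs.1
      have hden : (0:ℝ) < 1 + lam*s := by nlinarith
      have hcan : w*s/w = s := by field_simp
      have hne : w + lam*(w*s) ≠ 0 := by
        have he : w + lam*(w*s) = w*(1+lam*s) := by ring
        rw [he]; exact mul_ne_zero hw hden.ne'
      simp only [hcan]
      field_simp
      ring
  · -- 0 < w
    have hsgn : Real.sign w = 1 := Real.sign_of_pos hpos
    have hiff : ∀ x : ℝ, (0 < x / w ∧ x / w < t) ↔ x ∈ Set.Ioo (0:ℝ) (w*t) := fun x => by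
      rw [Set.mem_Ioo, lt_div_iff₀ hpos, div_lt_iff₀ hpos, zero_mul, mul_comm t w]
    have hfun : (fun x : ℝ => x^2 * (Real.sign w * ind (0 < x / w ∧ x / w < t) * xi *
        Real.exp (-(xi * (x / w))) / (w + lam * x)))
        = (Set.Ioo (0:ℝ) (w*t)).indicator
            (fun x => x^2 * (xi * Real.exp (-(xi * (x / w))) / (w + lam * x))) := by
      funext x
      by_cases hx : x ∈ Set.Ioo (0:ℝ) (w*t)
      · rw [Set.indicator_of_mem hx, hsgn]
        simp only [ind, if_pos ((hiff x).mpr hx)]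
        ring
      · rw [Set.indicator_of_notMem hx, hsgn]
        simp only [ind, if_neg (fun hc => hx ((hiff x).mp hc))]
        ring
    have hwt : (0:ℝ) ≤ w*t := by positivity
    have hcont : ContinuousOn (fun x : ℝ => x^2 * (xi * Real.exp (-(xi * (x / w))) /
        (w + lam * x))) (Set.Icc 0 (w*t)) := by
      apply ContinuousOn.mul (Continuous.continuousOn (by fun_prop))
      apply ContinuousOn.div (Continuous.continuousOn (by fun_prop))
        (Continuous.continuousOn (by fun_prop))
      intro x hx
      have h1 : 0 ≤ lam * x := mul_nonneg hlam.le hx.1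
      intro hc; linarith
    constructor
    · rw [hfun]
      apply MeasureTheory.IntegrableOn.integrable_indicator _ measurableSet_Ioo
      exact MeasureTheory.IntegrableOn.mono_set (ContinuousOn.integrableOn_Icc hcont)
        Set.Ioo_subset_Icc_self
    · rw [hfun, MeasureTheory.integral_indicator measurableSet_Ioo,
        ← MeasureTheory.integral_Ioc_eq_integral_Ioo,
        ← intervalIntegral.integral_of_le hwt]
      have hsub := intervalIntegral.smul_integral_comp_mul_left (a := (0:ℝ)) (b := t)
        (f := fun x => x^2 * (xi * Real.exp (-(xi * (x / w))) / (w + lam * x))) w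
      rw [mul_zero] at hsub
      rw [← hsub, smul_eq_mul, ← intervalIntegral.integral_const_mul]
      apply intervalIntegral.integral_congr
      intro s hs
      rw [Set.uIcc_of_le ht.le] at hs
      have hs0 : 0 ≤ s := hs.1
      have hden : (0:ℝ) < 1 + lam*s := by nlinarith
      have hcan : w*s/w = s := by field_simp
      have hne : w + lam*(w*s) ≠ 0 := by
        have he : w + lam*(w*s) = w*(1+lam*s) := by ring
        rw [he]; exact mul_ne_zero hw hden.ne'
      simp only [hcan]
      field_simp
      ring

lemma pieceB (v₁ v₂ t C : ℝ) (hv : v₂ < v₁) (ht : 0 < t) :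
    Integrable (fun x : ℝ => x^2 * (ind (v₂*t < x ∧ x < v₁*t) * C))
    ∧ ∫ x : ℝ, x^2 * (ind (v₂*t < x ∧ x < v₁*t) * C)
      = ((v₁*t)^3 - (v₂*t)^3)/3 * C := by
  have hfun : (fun x : ℝ => x^2 * (ind (v₂*t < x ∧ x < v₁*t) * C))
      = (Set.Ioo (v₂*t) (v₁*t)).indicator (fun x => x^2 * C) := by
    funext x
    by_cases hx : x ∈ Set.Ioo (v₂*t) (v₁*t)
    · rw [Set.indicator_of_mem hx]
      simp only [ind, if_pos (Set.mem_Ioo.mp hx)]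
      ring
    · rw [Set.indicator_of_notMem hx]
      simp only [ind, if_neg (fun hc => hx (Set.mem_Ioo.mpr hc))]
      ring
  have hle : v₂*t ≤ v₁*t := by nlinarith
  constructor
  · rw [hfun]
    apply MeasureTheory.IntegrableOn.integrable_indicator _ measurableSet_Ioo
    apply MeasureTheory.IntegrableOn.mono_set _ Set.Ioo_subset_Icc_self
    exact ContinuousOn.integrableOn_Icc (Continuous.continuousOn (by fun_prop))
  · rw [hfun, MeasureTheory.integral_indicator measurableSet_Ioo,
      ← MeasureTheory.integral_Ioc_eq_integral_Ioo,
      ← intervalIntegral.integral_of_le hle,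
      intervalIntegral.integral_mul_const, integral_pow]
    norm_num


/-- The time-region set for the Fubini argument. -/
def Txs (v₁ v₂ t x : ℝ) : Set ℝ := {s | 0 < s ∧ s ≤ t ∧ v₂*s < x ∧ x < v₁*s}

def Tprod (v₁ v₂ t : ℝ) : Set (ℝ×ℝ) := {p | p.2 ∈ Txs v₁ v₂ t p.1}

def Fp (v₁ v₂ lam xi t : ℝ) (p : ℝ×ℝ) : ℝ :=
  p.1^2 * (Tprod v₁ v₂ t).indicator (fun q => gfun lam xi q.2) p

lemma Txs_measurable (v₁ v₂ t x : ℝ) : MeasurableSet (Txs v₁ v₂ t x) := by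
  have : Txs v₁ v₂ t x = Set.Ioi 0 ∩ (Set.Iic t ∩
      ({s | v₂*s < x} ∩ {s | x < v₁*s})) := by
    ext s
    simp only [Txs, Set.mem_setOf_eq, Set.mem_inter_iff, Set.mem_Ioi, Set.mem_Iic,
      and_assoc]
  rw [this]
  exact measurableSet_Ioi.inter (measurableSet_Iic.inter
    ((measurableSet_lt (measurable_id.const_mul v₂) measurable_const).inter
      (measurableSet_lt measurable_const (measurable_id.const_mul v₁))))

lemma Tprod_measurable (v₁ v₂ t : ℝ) : MeasurableSet (Tprod v₁ v₂ t) := by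
  have : Tprod v₁ v₂ t = {p : ℝ×ℝ | 0 < p.2} ∩ ({p : ℝ×ℝ | p.2 ≤ t} ∩
      ({p : ℝ×ℝ | v₂*p.2 < p.1} ∩ {p : ℝ×ℝ | p.1 < v₁*p.2})) := by
    ext p
    simp only [Tprod, Txs, Set.mem_setOf_eq, Set.mem_inter_iff, and_assoc]
  rw [this]
  exact (measurableSet_lt measurable_const measurable_snd).inter
    ((measurableSet_le measurable_snd measurable_const).inter
      (((measurableSet_lt (measurable_snd.const_mul v₂) measurable_fst)).inter
        (measurableSet_lt measurable_fst (measurable_snd.const_mul v₁))))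

lemma gfun_bounds (lam xi : ℝ) (hlam : 0 < lam) (hxi : 0 < xi) (s : ℝ) (hs : 0 ≤ s) :
    0 ≤ gfun lam xi s ∧ gfun lam xi s ≤ lam := by
  have hu : 0 < xi*s + xi/lam := by
    have h1 : 0 ≤ xi*s := mul_nonneg hxi.le hs
    have h2 : 0 < xi/lam := div_pos hxi hlam
    linarith
  constructor
  · unfold gfun; positivity
  · unfold gfun
    have h1 : (xi*s + xi/lam)⁻¹ ≤ (xi/lam)⁻¹ := by
      apply inv_anti₀ (div_pos hxi hlam)
      nlinarith [mul_nonneg hxi.le hs]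
    have h2 : Real.exp (-(xi*s + xi/lam)) ≤ 1 := Real.exp_le_one_iff.mpr (by linarith)
    calc xi * ((xi*s+xi/lam)⁻¹ * Real.exp (-(xi*s+xi/lam)))
        ≤ xi * ((xi/lam)⁻¹ * 1) := by
          apply mul_le_mul_of_nonneg_left _ hxi.le
          apply mul_le_mul h1 h2 (Real.exp_nonneg _) (by positivity)
      _ = lam := by field_simp

lemma GamL_eq (v₁ v₂ lam xi t : ℝ) (hlam : 0 < lam) (hxi : 0 < xi)
    (hcase : (v₂ < 0 ∧ 0 < v₁) ∨ (0 < v₂ ∧ v₂ < v₁)) (ht : 0 < t) (x : ℝ) :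
    ind (min (v₂*t) 0 < x ∧ x < v₁*t) * GamL v₁ v₂ lam xi x t
      = ∫ s in Txs v₁ v₂ t x, gfun lam xi s := by
  rcases hcase with ⟨hv2n, hv1p⟩ | ⟨hv2p, hv12⟩
  · -- v₂ < 0 < v₁
    have hmin : min (v₂*t) 0 = v₂*t := min_eq_left (by nlinarith)
    rw [hmin]
    simp only [GamL, if_pos hv2n]
    by_cases hx : v₂*t < x ∧ x < v₁*t
    · set M := max (x/v₁) (x/v₂) with hM
      have hM0 : 0 ≤ M := by
        rcases le_or_gt 0 x with h0 | h0
        · exact le_max_of_le_left (div_nonneg h0 hv1p.le)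
        · exact le_max_of_le_right (div_pos_of_neg_of_neg h0 hv2n).le
      have hMt : M ≤ t := by
        apply max_le
        · rw [div_le_iff₀ hv1p]; nlinarith [hx.2]
        · rw [div_le_iff_of_neg hv2n]; nlinarith [hx.1]
      rw [iGamma_shift lam xi hxi.ne' M t, intervalIntegral.integral_of_le hMt]
      have hTxeq : Txs v₁ v₂ t x = Set.Ioc M t := by
        ext s
        simp only [Txs, Set.mem_setOf_eq, Set.mem_Ioc]
        constructor
        · rintro ⟨hs0, hst, h1, h2⟩
          refine ⟨max_lt ?_ ?_, hst⟩
          · rw [div_lt_iff₀ hv1p]; nlinarith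
          · rw [div_lt_iff_of_neg hv2n]; nlinarith
        · rintro ⟨hMs, hst⟩
          have h1 : x/v₁ < s := lt_of_le_of_lt (le_max_left _ _) hMs
          have h2 : x/v₂ < s := lt_of_le_of_lt (le_max_right _ _) hMs
          rw [div_lt_iff₀ hv1p] at h1
          rw [div_lt_iff_of_neg hv2n] at h2
          exact ⟨lt_of_le_of_lt hM0 hMs, hst, by nlinarith, by nlinarith⟩
      rw [hTxeq]
      simp only [ind, if_pos hx, one_mul]
    · have hTxeq : Txs v₁ v₂ t x = ∅ := by
        ext s
        simp only [Txs, Set.mem_setOf_eq, Set.mem_empty_iff_false, iff_false, not_and]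
        intro hs0 hst h1 h2
        rw [not_and_or, not_lt, not_lt] at hx
        rcases hx with h | h
        · nlinarith [mul_nonneg (neg_nonneg.mpr hv2n.le) (sub_nonneg.mpr hst)]
        · nlinarith [mul_nonneg hv1p.le (sub_nonneg.mpr hst)]
      rw [hTxeq]
      simp only [ind, if_neg hx, zero_mul]
      simp
  · -- 0 < v₂ < v₁
    have hv1p : 0 < v₁ := lt_trans hv2p hv12
    have hmin : min (v₂*t) 0 = 0 := min_eq_right (mul_pos hv2p ht).le
    rw [hmin]
    simp only [GamL, if_neg (not_lt.mpr hv2p.le)]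
    by_cases hx : 0 < x ∧ x < v₁*t
    · have ha : 0 ≤ x/v₁ := (div_pos hx.1 hv1p).le
      have hb : x/v₁ ≤ x/v₂ := by
        rw [div_le_div_iff₀ hv1p hv2p]; nlinarith
      have hc : x/v₁ < t := by rw [div_lt_iff₀ hv1p]; nlinarith [hx.2]
      have hab : x/v₁ ≤ min (x/v₂) t := le_min hb hc.le
      rw [iGamma_shift lam xi hxi.ne' (x/v₁) (min (x/v₂) t),
        intervalIntegral.integral_of_le hab]
      simp only [ind, if_pos hx, one_mul]
      rcases le_or_gt (x/v₂) t with hxt | hxt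
      · rw [min_eq_left hxt]
        have hTxeq : Txs v₁ v₂ t x = Set.Ioo (x/v₁) (x/v₂) := by
          ext s
          simp only [Txs, Set.mem_setOf_eq, Set.mem_Ioo]
          constructor
          · rintro ⟨hs0, hst, h1, h2⟩
            constructor
            · rw [div_lt_iff₀ hv1p]; nlinarith
            · rw [lt_div_iff₀ hv2p]; nlinarith
          · rintro ⟨h1, h2⟩
            have hs0 : 0 < s := lt_of_le_of_lt ha h1
            rw [div_lt_iff₀ hv1p] at h1
            rw [lt_div_iff₀ hv2p] at h2
            refine ⟨hs0, le_trans ?_ hxt, by nlinarith, by nlinarith⟩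
            rw [le_div_iff₀ hv2p]; nlinarith
        rw [hTxeq, MeasureTheory.integral_Ioc_eq_integral_Ioo]
      · rw [min_eq_right hxt.le]
        have hTxeq : Txs v₁ v₂ t x = Set.Ioc (x/v₁) t := by
          ext s
          simp only [Txs, Set.mem_setOf_eq, Set.mem_Ioc]
          constructor
          · rintro ⟨hs0, hst, h1, h2⟩
            refine ⟨?_, hst⟩
            rw [div_lt_iff₀ hv1p]; nlinarith
          · rintro ⟨h1, hst⟩
            have hs0 : 0 < s := lt_of_le_of_lt ha h1
            rw [div_lt_iff₀ hv1p] at h1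
            have h2 : s < x/v₂ := lt_of_le_of_lt hst hxt
            rw [lt_div_iff₀ hv2p] at h2
            exact ⟨hs0, hst, by nlinarith, by nlinarith⟩
        rw [hTxeq]
    · have hTxeq : Txs v₁ v₂ t x = ∅ := by
        ext s
        simp only [Txs, Set.mem_setOf_eq, Set.mem_empty_iff_false, iff_false, not_and]
        intro hs0 hst h1 h2
        rw [not_and_or, not_lt, not_lt] at hx
        rcases hx with h | h
        · nlinarith [mul_pos hv2p hs0]
        · nlinarith [mul_nonneg hv1p.le (sub_nonneg.mpr hst)]
      rw [hTxeq]
      simp only [ind, if_neg hx, zero_mul]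
      simp

lemma pieceC (v₁ v₂ lam xi t : ℝ) (hlam : 0 < lam) (hxi : 0 < xi) (hv : v₂ < v₁)
    (hcase : (v₂ < 0 ∧ 0 < v₁) ∨ (0 < v₂ ∧ v₂ < v₁)) (ht : 0 < t) :
    Integrable (fun x : ℝ => x^2 * (ind (min (v₂*t) 0 < x ∧ x < v₁*t) *
        (xi * Real.exp (xi/lam) / (v₁ - v₂)) * GamL v₁ v₂ lam xi x t))
    ∧ ∫ x : ℝ, x^2 * (ind (min (v₂*t) 0 < x ∧ x < v₁*t) *
        (xi * Real.exp (xi/lam) / (v₁ - v₂)) * GamL v₁ v₂ lam xi x t)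
      = ∫ s in (0:ℝ)..t, (xi*lam*(v₁^2+v₁*v₂+v₂^2)/3*s^3 + (0:ℝ)*s^2) *
          Real.exp (-(xi*s)) / (1+lam*s) := by
  have hgm : Measurable (gfun lam xi) := by unfold gfun; fun_prop
  have hFmeas : AEStronglyMeasurable (Fp v₁ v₂ lam xi t) volume :=
    ((measurable_fst.pow_const 2).mul
      ((hgm.comp measurable_snd).indicator (Tprod_measurable v₁ v₂ t))).aestronglyMeasurable
  set a := (|v₁| + |v₂|) * t with ha
  have hDint : Integrable ((Set.Icc (-a) a ×ˢ Set.Icc (0:ℝ) t).indicator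
      (fun _ => a^2 * lam)) volume := by
    apply MeasureTheory.IntegrableOn.integrable_indicator _
      (measurableSet_Icc.prod measurableSet_Icc)
    rw [MeasureTheory.integrableOn_const_iff]
    right
    rw [Measure.volume_eq_prod, Measure.prod_prod, Real.volume_Icc, Real.volume_Icc]
    exact ENNReal.mul_lt_top ENNReal.ofReal_lt_top ENNReal.ofReal_lt_top
  have hbound : ∀ p : ℝ×ℝ, ‖Fp v₁ v₂ lam xi t p‖ ≤
      (Set.Icc (-a) a ×ˢ Set.Icc (0:ℝ) t).indicator (fun _ => a^2 * lam) p := by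
    intro p
    by_cases hp : p ∈ Tprod v₁ v₂ t
    · obtain ⟨h1, h2, h3, h4⟩ := id hp
      have e1 := mul_le_mul_of_nonneg_right (neg_abs_le v₂) h1.le
      have e2 := mul_le_mul_of_nonneg_left h2 (abs_nonneg v₂)
      have e3 := mul_le_mul_of_nonneg_right (le_abs_self v₁) h1.le
      have e4 := mul_le_mul_of_nonneg_left h2 (abs_nonneg v₁)
      have e5 := mul_nonneg (abs_nonneg v₁) ht.le
      have e6 := mul_nonneg (abs_nonneg v₂) ht.le
      have hp1 : |p.1| ≤ a := by
        rw [abs_le, ha]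
        constructor
        · nlinarith
        · nlinarith
      have hmem : p ∈ Set.Icc (-a) a ×ˢ Set.Icc (0:ℝ) t :=
        Set.mem_prod.mpr ⟨Set.mem_Icc.mpr (abs_le.mp hp1), Set.mem_Icc.mpr ⟨h1.le, h2⟩⟩
      rw [Set.indicator_of_mem hmem]
      have hg := gfun_bounds lam xi hlam hxi p.2 h1.le
      have hF : Fp v₁ v₂ lam xi t p = p.1^2 * gfun lam xi p.2 := by
        unfold Fp; rw [Set.indicator_of_mem hp]
      rw [hF, Real.norm_eq_abs, abs_of_nonneg (mul_nonneg (sq_nonneg _) hg.1)]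
      have hsq : p.1^2 ≤ a^2 := by nlinarith [abs_le.mp hp1]
      exact mul_le_mul hsq hg.2 hg.1 (by positivity)
    · have hF : Fp v₁ v₂ lam xi t p = 0 := by
        unfold Fp; rw [Set.indicator_of_notMem hp, mul_zero]
      rw [hF, norm_zero]
      exact Set.indicator_nonneg (fun _ _ => by positivity) p
  have hFint : Integrable (Fp v₁ v₂ lam xi t) volume :=
    hDint.mono' hFmeas (ae_of_all _ hbound)
  have hFint' : Integrable (Fp v₁ v₂ lam xi t) ((volume : Measure ℝ).prod volume) := by
    rwa [← Measure.volume_eq_prod]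
  have hfun2 : (fun x : ℝ => x^2 * (ind (min (v₂*t) 0 < x ∧ x < v₁*t) *
      (xi * Real.exp (xi/lam) / (v₁ - v₂)) * GamL v₁ v₂ lam xi x t))
      = fun x => (xi * Real.exp (xi/lam) / (v₁ - v₂)) *
          ∫ s, Fp v₁ v₂ lam xi t (x, s) := by
    funext x
    have h1 : (fun s => Fp v₁ v₂ lam xi t (x, s))
        = fun s => x ^ 2 * (Txs v₁ v₂ t x).indicator (gfun lam xi) s := by
      funext s
      unfold Fp
      by_cases hs : s ∈ Txs v₁ v₂ t x
      · rw [Set.indicator_of_mem hs, Set.indicator_of_mem (show (x,s) ∈ Tprod v₁ v₂ t from hs)]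
      · rw [Set.indicator_of_notMem hs,
          Set.indicator_of_notMem (show (x,s) ∉ Tprod v₁ v₂ t from hs), mul_zero]
    rw [show x^2 * (ind (min (v₂*t) 0 < x ∧ x < v₁*t) *
        (xi * Real.exp (xi/lam) / (v₁ - v₂)) * GamL v₁ v₂ lam xi x t)
      = (xi * Real.exp (xi/lam) / (v₁ - v₂)) *
        (x^2 * (ind (min (v₂*t) 0 < x ∧ x < v₁*t) * GamL v₁ v₂ lam xi x t)) from by ring,
      GamL_eq v₁ v₂ lam xi t hlam hxi hcase ht x,
      ← MeasureTheory.integral_indicator (Txs_measurable v₁ v₂ t x),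
      ← MeasureTheory.integral_const_mul, ← h1]
  constructor
  · rw [hfun2]
    exact (hFint'.integral_prod_left).const_mul _
  · rw [hfun2, MeasureTheory.integral_const_mul]
    rw [MeasureTheory.integral_integral_swap (by exact hFint')]
    have hinner : ∀ s : ℝ, (∫ x, Fp v₁ v₂ lam xi t (x, s))
        = (Set.Ioc (0:ℝ) t).indicator
            (fun s => ((v₁*s)^3 - (v₂*s)^3)/3 * gfun lam xi s) s := by
      intro s
      by_cases hs : s ∈ Set.Ioc (0:ℝ) t
      · rw [Set.indicator_of_mem hs]
        have hs1 : 0 < s := hs.1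
        have hs2 : s ≤ t := hs.2
        have hfx : (fun x => Fp v₁ v₂ lam xi t (x, s))
            = (Set.Ioo (v₂*s) (v₁*s)).indicator (fun x => x^2 * gfun lam xi s) := by
          funext x
          unfold Fp
          by_cases hx : x ∈ Set.Ioo (v₂*s) (v₁*s)
          · rw [Set.indicator_of_mem hx,
              Set.indicator_of_mem (show (x,s) ∈ Tprod v₁ v₂ t from ⟨hs1, hs2, hx.1, hx.2⟩)]
          · rw [Set.indicator_of_notMem hx,
              Set.indicator_of_notMem (show (x,s) ∉ Tprod v₁ v₂ t from
                fun hc => hx ⟨hc.2.2.1, hc.2.2.2⟩), mul_zero]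
        rw [hfx, MeasureTheory.integral_indicator measurableSet_Ioo,
          ← MeasureTheory.integral_Ioc_eq_integral_Ioo,
          ← intervalIntegral.integral_of_le (show v₂*s ≤ v₁*s by nlinarith),
          intervalIntegral.integral_mul_const, integral_pow]
        norm_num
      · rw [Set.indicator_of_notMem hs]
        have hz : (fun x => Fp v₁ v₂ lam xi t (x, s)) = fun _ => (0:ℝ) := by
          funext x
          unfold Fp
          rw [Set.indicator_of_notMem (show (x,s) ∉ Tprod v₁ v₂ t from
            fun hc => hs ⟨hc.1, hc.2.1⟩), mul_zero]
        rw [hz, integral_zero]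
    rw [MeasureTheory.integral_congr_ae (Filter.Eventually.of_forall hinner),
      MeasureTheory.integral_indicator measurableSet_Ioc,
      ← intervalIntegral.integral_of_le ht.le,
      ← intervalIntegral.integral_const_mul]
    apply intervalIntegral.integral_congr
    intro s hs
    rw [Set.uIcc_of_le ht.le] at hs
    have hs0 : 0 ≤ s := hs.1
    have hden : (0:ℝ) < 1 + lam*s := by nlinarith
    have hu : (0:ℝ) < xi*s + xi/lam := by
      have h1 : 0 ≤ xi*s := mul_nonneg hxi.le hs0
      have h2 : 0 < xi/lam := div_pos hxi hlam
      linarith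
    have hvne : v₁ - v₂ ≠ 0 := sub_ne_zero.mpr (ne_of_gt hv)
    simp only [gfun]
    rw [show -(xi * s + xi / lam) = -(xi*s) + -(xi/lam) by ring, Real.exp_add,
      Real.exp_neg (xi/lam)]
    have hex := Real.exp_ne_zero (xi/lam)
    field_simp
    ring




set_option maxHeartbeats 2000000 in
lemma mainLemma (v₁ v₂ lam xi w w' t : ℝ) (hlam : 0 < lam) (hxi : 0 < xi)
    (hv : v₂ < v₁) (hv1 : v₁ ≠ 0) (hv2 : v₂ ≠ 0)
    (hcase : (v₂ < 0 ∧ 0 < v₁) ∨ (0 < v₂ ∧ v₂ < v₁))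
    (hwv : w = v₁ ∨ w = v₂) (hww : w' ^ 2 = v₁ ^ 2 + v₂ ^ 2 - w ^ 2) (ht : 0 < t) :
    (w * t) ^ 2 * Real.exp (-(xi * t)) / (1 + lam * t)
      + ∫ x : ℝ, x ^ 2 *
        (Real.sign w * ind (0 < x / w ∧ x / w < t) * xi *
            Real.exp (-(xi * (x / w))) / (w + lam * x)
          + ind (v₂ * t < x ∧ x < v₁ * t) * lam * Real.exp (-(xi * t)) /
              ((v₁ - v₂) * (1 + lam * t))
          + ind (min (v₂ * t) 0 < x ∧ x < v₁ * t) *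
              (xi * Real.exp (xi / lam) / (v₁ - v₂)) * GamL v₁ v₂ lam xi x t)
      = (1 - Real.exp (-(xi * t))) *
          (2 * (v₁ ^ 2 + v₁ * v₂ + v₂ ^ 2) / (3 * xi ^ 2)
            + (2 * w ^ 2 - v₁ * v₂ - w' ^ 2) / (3 * lam) * (1 / xi - 1 / lam))
        - t * Real.exp (-(xi * t)) *
          (2 * (v₁ ^ 2 + v₁ * v₂ + v₂ ^ 2) / (3 * xi)
            + (2 * w ^ 2 - v₁ * v₂ - w' ^ 2) / (3 * lam * (1 + lam * t)))
        + xi * Real.exp (xi / lam) * (2 * w ^ 2 - v₁ * v₂ - w' ^ 2) / (3 * lam ^ 3) *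
          iGamma (xi / lam) (xi / lam * (1 + lam * t)) := by
  have hw0 : w ≠ 0 := by rcases hwv with rfl | rfl; exacts [hv1, hv2]
  obtain ⟨hAint, hAval⟩ := pieceA lam xi w t hlam hxi ht hw0
  obtain ⟨hBint, hBval⟩ := pieceB v₁ v₂ t
    (lam * Real.exp (-(xi * t)) / ((v₁ - v₂) * (1 + lam * t))) hv ht
  obtain ⟨hCint, hCval⟩ := pieceC v₁ v₂ lam xi t hlam hxi hv hcase ht
  have hsplit : (∫ x : ℝ, x ^ 2 *
        (Real.sign w * ind (0 < x / w ∧ x / w < t) * xi *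
            Real.exp (-(xi * (x / w))) / (w + lam * x)
          + ind (v₂ * t < x ∧ x < v₁ * t) * lam * Real.exp (-(xi * t)) /
              ((v₁ - v₂) * (1 + lam * t))
          + ind (min (v₂ * t) 0 < x ∧ x < v₁ * t) *
              (xi * Real.exp (xi / lam) / (v₁ - v₂)) * GamL v₁ v₂ lam xi x t))
      = ∫ x : ℝ, (x^2 * (Real.sign w * ind (0 < x / w ∧ x / w < t) * xi *
            Real.exp (-(xi * (x / w))) / (w + lam * x))
          + (x^2 * (ind (v₂*t < x ∧ x < v₁*t) *
              (lam * Real.exp (-(xi * t)) / ((v₁ - v₂) * (1 + lam * t))))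
            + x^2 * (ind (min (v₂*t) 0 < x ∧ x < v₁*t) *
              (xi * Real.exp (xi/lam) / (v₁ - v₂)) * GamL v₁ v₂ lam xi x t))) :=
    MeasureTheory.integral_congr_ae (Filter.Eventually.of_forall fun x => by ring)
  have hBC : Integrable (fun x : ℝ =>
      x^2 * (ind (v₂*t < x ∧ x < v₁*t) *
        (lam * Real.exp (-(xi * t)) / ((v₁ - v₂) * (1 + lam * t))))
      + x^2 * (ind (min (v₂*t) 0 < x ∧ x < v₁*t) *
        (xi * Real.exp (xi/lam) / (v₁ - v₂)) * GamL v₁ v₂ lam xi x t)) volume :=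
    hBint.add hCint
  rw [hsplit, MeasureTheory.integral_add hAint hBC,
    MeasureTheory.integral_add hBint hCint, hAval, hBval, hCval]
  rw [cubic_div_integral lam xi t 0 (xi*w^2) hlam hxi ht,
    cubic_div_integral lam xi t (xi*lam*(v₁^2+v₁*v₂+v₂^2)/3) 0 hlam hxi ht,
    integral_exp_div lam xi t hlam hxi ht]
  rw [integral_poly_exp xi hxi.ne', integral_poly_exp xi hxi.ne']
  rw [hww]
  have hden : (0:ℝ) < 1 + lam * t := by nlinarith
  have hvne : v₁ - v₂ ≠ 0 := sub_ne_zero.mpr (ne_of_gt hv)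
  field_simp [hvne, hden.ne', hxi.ne', hlam.ne']
  ring


/-- Theorem 5.2, Eq. (55): the second moment of the position of the reset
telegraph process. -/
theorem second_moment (v₁ v₂ lam xi : ℝ) (hlam : 0 < lam) (hxi : 0 < xi)
    (hv : v₂ < v₁) (hv1 : v₁ ≠ 0) (hv2 : v₂ ≠ 0)
    (hcase : (v₂ < 0 ∧ 0 < v₁) ∨ (0 < v₂ ∧ v₂ < v₁)) :
    ∀ j : ℕ, (j = 1 ∨ j = 2) → ∀ t : ℝ, 0 < t →
      (vel v₁ v₂ j * t) ^ 2 * Real.exp (-(xi * t)) / (1 + lam * t)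
        + ∫ x : ℝ, x ^ 2 * pTil v₁ v₂ lam xi j x t
      = Smom v₁ v₂ lam xi j t := by
  intro j hj t ht
  rcases hj with rfl | rfl
  · have e1 : vel v₁ v₂ 1 = v₁ := if_pos rfl
    have e2 : vel v₁ v₂ (3 - 1) = v₂ := if_neg (by norm_num)
    have h := mainLemma v₁ v₂ lam xi v₁ v₂ t hlam hxi hv hv1 hv2 hcase (Or.inl rfl)
      (by ring) ht
    simp only [pTil, Smom, e1, e2]
    exact h
  · have e1 : vel v₁ v₂ 2 = v₂ := if_neg (by norm_num)
    have e2 : vel v₁ v₂ (3 - 2) = v₁ := if_pos (by norm_num)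
    have h := mainLemma v₁ v₂ lam xi v₂ v₁ t hlam hxi hv hv1 hv2 hcase (Or.inr rfl)
      (by ring) ht
    simp only [pTil, Smom, e1, e2]
    exact h

end TelegraphReset
end
end

section
/- (Remark on extrema of the mean.) Let E_j(t) be the mean position of the reset telegraph process as in context. Then for every t > 0 and j ∈ {1,2}, the derivative satisfies E_j'(t) = e^{−ξt}·( 2v_j + λt(2 + λt)(v₁ + v₂) )/(2(1 + λt)²). Consequently: (i) if 0 < v₁ < −v₂, then E₁ attains its maximum over (0, ∞) at t_M = −(1/λ)·( 1 + √(v₂² − v₁²)/(v₁ + v₂) ), which is a positive real number; (ii) if 0 < −v₂ < v₁, then E₂ attains its minimum over (0, ∞) at t_m = −(1/λ)·( 1 − √(v₁² − v₂²)/(v₁ + v₂) ), which is a positive real number. -/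
open MeasureTheory Real Filter Topology Set

noncomputable section

namespace TelegraphReset

lemma key_deriv (c D lam xi : ℝ) (hlam : 0 < lam) (hxi : 0 < xi) (t : ℝ) (ht : 0 < t) :
    HasDerivAt (fun s => (1 - Real.exp (-(xi * s))) * (c / (2 * xi) + D / (2 * lam))
      - xi * Real.exp (xi / lam) * D / (2 * lam ^ 2) *
          iGamma (xi / lam) (xi / lam * (1 + lam * s))
      + s * Real.exp (-(xi * s)) * D / (2 * (1 + lam * s)))
      (Real.exp (-(xi * t)) * (c + D + lam * t * (2 + lam * t) * c) / (2 * (1 + lam * t) ^ 2))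
      t := by
  have hlt : (0:ℝ) < 1 + lam * t := by positivity
  have hbt : (0:ℝ) < xi / lam * (1 + lam * t) := by positivity
  have hal : (0:ℝ) < xi / lam := by positivity
  have hb : HasDerivAt (fun s : ℝ => xi / lam * (1 + lam * s)) xi t := by
    have : HasDerivAt (fun s : ℝ => xi / lam * (1 + lam * s)) (xi / lam * (lam * 1)) t :=
      (((hasDerivAt_id t).const_mul lam).const_add 1).const_mul (xi / lam)
    convert this using 1
    field_simp
  have hint : IntervalIntegrable (fun u : ℝ => u⁻¹ * Real.exp (-u)) volume (xi / lam)
      (xi / lam * (1 + lam * t)) := by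
    apply ContinuousOn.intervalIntegrable
    intro u hu
    rw [Set.mem_uIcc] at hu
    have hu0 : 0 < u := by rcases hu with h | h <;> nlinarith [h.1, h.2]
    exact (((continuousAt_inv₀ hu0.ne').mul (Real.continuous_exp.continuousAt.comp
      (continuous_neg.continuousAt))).continuousWithinAt)
  have hmeas : StronglyMeasurableAtFilter (fun u : ℝ => u⁻¹ * Real.exp (-u))
      (𝓝 (xi / lam * (1 + lam * t))) volume :=
    ⟨Set.univ, Filter.univ_mem, ((measurable_inv.mul
      (Real.measurable_exp.comp measurable_neg)).aestronglyMeasurable)⟩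
  have hcont : ContinuousAt (fun u : ℝ => u⁻¹ * Real.exp (-u)) (xi / lam * (1 + lam * t)) :=
    (continuousAt_inv₀ hbt.ne').mul (Real.continuous_exp.continuousAt.comp
      continuous_neg.continuousAt)
  have hF := intervalIntegral.integral_hasDerivAt_right hint hmeas hcont
  have hG : HasDerivAt (fun s : ℝ => iGamma (xi / lam) (xi / lam * (1 + lam * s)))
      ((xi / lam * (1 + lam * t))⁻¹ * Real.exp (-(xi / lam * (1 + lam * t))) * xi) t := by
    have := hF.comp t hb
    exact this
  have hexp : HasDerivAt (fun s : ℝ => Real.exp (-(xi * s))) (Real.exp (-(xi * t)) * (-xi)) t := by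
    have h0 : HasDerivAt (fun s : ℝ => -(xi * s)) (-xi) t := by
      have := ((hasDerivAt_id t).const_mul xi).neg
      simp only [mul_one] at this
      exact this
    exact h0.exp
  have h1 : HasDerivAt (fun s : ℝ => (1 - Real.exp (-(xi * s))) * (c / (2 * xi) + D / (2 * lam)))
      ((xi * Real.exp (-(xi * t))) * (c / (2 * xi) + D / (2 * lam))) t := by
    have := (hexp.const_sub 1).mul_const (c / (2 * xi) + D / (2 * lam))
    refine this.congr_deriv ?_
    ring
  have h2 : HasDerivAt (fun s : ℝ => xi * Real.exp (xi / lam) * D / (2 * lam ^ 2) *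
      iGamma (xi / lam) (xi / lam * (1 + lam * s)))
      (xi * Real.exp (xi / lam) * D / (2 * lam ^ 2) *
        ((xi / lam * (1 + lam * t))⁻¹ * Real.exp (-(xi / lam * (1 + lam * t))) * xi)) t :=
    hG.const_mul _
  have h3 : HasDerivAt (fun s : ℝ => s * Real.exp (-(xi * s)) * D / (2 * (1 + lam * s)))
      (((Real.exp (-(xi * t)) + t * (Real.exp (-(xi * t)) * (-xi))) * D * (2 * (1 + lam * t))
        - t * Real.exp (-(xi * t)) * D * (2 * lam)) / (2 * (1 + lam * t)) ^ 2) t := by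
    have hn : HasDerivAt (fun s : ℝ => s * Real.exp (-(xi * s)) * D)
        ((Real.exp (-(xi * t)) + t * (Real.exp (-(xi * t)) * (-xi))) * D) t := by
      have := ((hasDerivAt_id t).mul hexp).mul_const D
      simpa using this
    have hd : HasDerivAt (fun s : ℝ => 2 * (1 + lam * s)) (2 * lam) t := by
      have := (((hasDerivAt_id t).const_mul lam).const_add 1).const_mul (2:ℝ)
      simpa using this
    have := hn.div hd (by positivity)
    exact this
  have := (h1.sub h2).add h3
  refine this.congr_deriv ?_
  have hexpand : Real.exp (-(xi / lam * (1 + lam * t)))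
      = (Real.exp (xi / lam))⁻¹ * Real.exp (-(xi * t)) := by
    rw [← Real.exp_neg, ← Real.exp_add]
    congr 1
    field_simp
    ring
  rw [hexpand]
  field_simp
  ring

lemma Emom_hasDerivAt (v₁ v₂ lam xi : ℝ) (hlam : 0 < lam) (hxi : 0 < xi) (j : ℕ)
    (hj : j = 1 ∨ j = 2) (t : ℝ) (ht : 0 < t) :
    HasDerivAt (fun s => Emom v₁ v₂ lam xi j s)
      (Real.exp (-(xi * t)) *
        (2 * vel v₁ v₂ j + lam * t * (2 + lam * t) * (v₁ + v₂)) /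
        (2 * (1 + lam * t) ^ 2)) t := by
  have key := key_deriv (v₁ + v₂) (vel v₁ v₂ j - vel v₁ v₂ (3 - j)) lam xi hlam hxi t ht
  have h2v : 2 * vel v₁ v₂ j + lam * t * (2 + lam * t) * (v₁ + v₂)
      = (v₁ + v₂) + (vel v₁ v₂ j - vel v₁ v₂ (3 - j)) + lam * t * (2 + lam * t) * (v₁ + v₂) := by
    rcases hj with rfl | rfl <;> simp [vel] <;> ring
  unfold Emom
  rw [h2v]
  exact key

lemma le_of_deriv_nonneg {f f' : ℝ → ℝ} (hf : ∀ t : ℝ, 0 < t → HasDerivAt f (f' t) t)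
    {a b : ℝ} (h0 : 0 < a) (hab : a ≤ b) (hpos : ∀ t ∈ Set.Ioo a b, 0 ≤ f' t) :
    f a ≤ f b := by
  have hC : ContinuousOn f (Set.Icc a b) := fun x hx =>
    ((hf x (lt_of_lt_of_le h0 hx.1)).continuousAt).continuousWithinAt
  have hD : DifferentiableOn ℝ f (interior (Set.Icc a b)) := by
    rw [interior_Icc]
    exact fun x hx => ((hf x (h0.trans hx.1)).differentiableAt).differentiableWithinAt
  have hM := monotoneOn_of_deriv_nonneg (convex_Icc a b) hC hD (by
    rw [interior_Icc]
    intro x hx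
    rw [(hf x (h0.trans hx.1)).deriv]
    exact hpos x hx)
  exact hM ⟨le_refl a, hab⟩ ⟨hab, le_refl b⟩ hab

lemma le_of_deriv_nonpos {f f' : ℝ → ℝ} (hf : ∀ t : ℝ, 0 < t → HasDerivAt f (f' t) t)
    {a b : ℝ} (h0 : 0 < a) (hab : a ≤ b) (hneg : ∀ t ∈ Set.Ioo a b, f' t ≤ 0) :
    f b ≤ f a := by
  have hC : ContinuousOn f (Set.Icc a b) := fun x hx =>
    ((hf x (lt_of_lt_of_le h0 hx.1)).continuousAt).continuousWithinAt
  have hD : DifferentiableOn ℝ f (interior (Set.Icc a b)) := by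
    rw [interior_Icc]
    exact fun x hx => ((hf x (h0.trans hx.1)).differentiableAt).differentiableWithinAt
  have hM := antitoneOn_of_deriv_nonpos (convex_Icc a b) hC hD (by
    rw [interior_Icc]
    intro x hx
    rw [(hf x (h0.trans hx.1)).deriv]
    exact hneg x hx)
  exact hM ⟨le_refl a, hab⟩ ⟨hab, le_refl b⟩ hab


set_option maxHeartbeats 1000000 in
/-- Remark on extrema of the mean: derivative of the mean, and location of its
maximum/minimum over `(0,∞)` in the two velocity regimes. -/
theorem mean_extrema (v₁ v₂ lam xi : ℝ) (hlam : 0 < lam) (hxi : 0 < xi)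
    (hv : v₂ < v₁) (hv1 : v₁ ≠ 0) (hv2 : v₂ ≠ 0) :
    (∀ j : ℕ, (j = 1 ∨ j = 2) → ∀ t : ℝ, 0 < t →
      HasDerivAt (fun s => Emom v₁ v₂ lam xi j s)
        (Real.exp (-(xi * t)) *
          (2 * vel v₁ v₂ j + lam * t * (2 + lam * t) * (v₁ + v₂)) /
          (2 * (1 + lam * t) ^ 2)) t)
    ∧ (0 < v₁ → v₁ < -v₂ →
        0 < -(1 / lam) * (1 + Real.sqrt (v₂ ^ 2 - v₁ ^ 2) / (v₁ + v₂))
        ∧ IsMaxOn (fun s => Emom v₁ v₂ lam xi 1 s) (Set.Ioi 0)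
            (-(1 / lam) * (1 + Real.sqrt (v₂ ^ 2 - v₁ ^ 2) / (v₁ + v₂))))
    ∧ (0 < -v₂ → -v₂ < v₁ →
        0 < -(1 / lam) * (1 - Real.sqrt (v₁ ^ 2 - v₂ ^ 2) / (v₁ + v₂))
        ∧ IsMinOn (fun s => Emom v₁ v₂ lam xi 2 s) (Set.Ioi 0)
            (-(1 / lam) * (1 - Real.sqrt (v₁ ^ 2 - v₂ ^ 2) / (v₁ + v₂)))) := by
  refine ⟨fun j hj t ht => Emom_hasDerivAt v₁ v₂ lam xi hlam hxi j hj t ht, ?_, ?_⟩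
  · -- case (i): maximum for j = 1
    intro hv1p hv12
    have hc : v₁ + v₂ < 0 := by linarith
    have hcne : v₁ + v₂ ≠ 0 := hc.ne
    set S := Real.sqrt (v₂ ^ 2 - v₁ ^ 2) with hSdef
    set tM := -(1 / lam) * (1 + S / (v₁ + v₂)) with htMdef
    have hS2 : S ^ 2 = v₂ ^ 2 - v₁ ^ 2 := Real.sq_sqrt (by nlinarith)
    have hSgt : -(v₁ + v₂) < S := (Real.lt_sqrt (by linarith)).mpr (by nlinarith)
    have htM : 0 < tM := by
      have h' : 1 + S / (v₁ + v₂) < 0 := by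
        have := (div_lt_iff_of_neg hc).mpr (by linarith : (-1 : ℝ) * (v₁ + v₂) < S)
        linarith
      have := mul_neg_of_pos_of_neg (by positivity : (0:ℝ) < 1 / lam) h'
      rw [htMdef, neg_mul]
      linarith
    have h1M : 1 + lam * tM = -S / (v₁ + v₂) := by
      rw [htMdef]
      field_simp
      ring
    have hsq : (1 + lam * tM) ^ 2 * (v₁ + v₂) ^ 2 = v₂ ^ 2 - v₁ ^ 2 := by
      rw [h1M]
      field_simp
      linarith [hS2]
    have hNM : 2 * v₁ + lam * tM * (2 + lam * tM) * (v₁ + v₂) = 0 := by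
      have h0 : (2 * v₁ + lam * tM * (2 + lam * tM) * (v₁ + v₂)) * (v₁ + v₂) = 0 := by
        linear_combination hsq
      rcases mul_eq_zero.mp h0 with h | h
      · exact h
      · exact absurd h hcne
    have hd1 : ∀ s : ℝ, 0 < s → HasDerivAt (fun u => Emom v₁ v₂ lam xi 1 u)
        (Real.exp (-(xi * s)) * (2 * v₁ + lam * s * (2 + lam * s) * (v₁ + v₂)) /
          (2 * (1 + lam * s) ^ 2)) s := by
      intro s hs
      have e : vel v₁ v₂ 1 = v₁ := by norm_num [vel]
      have := Emom_hasDerivAt v₁ v₂ lam xi hlam hxi 1 (Or.inl rfl) s hs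
      rw [e] at this
      exact this
    have hfact : ∀ s : ℝ, 2 * v₁ + lam * s * (2 + lam * s) * (v₁ + v₂)
        = (-(v₁ + v₂)) * (lam * (tM - s)) * (2 + lam * s + lam * tM) := by
      intro s
      linear_combination hNM
    refine ⟨htM, ?_⟩
    rw [isMaxOn_iff]
    intro x hx
    have hx0 : 0 < x := hx
    rcases le_total x tM with h | h
    · refine le_of_deriv_nonneg hd1 hx0 h (fun u hu => ?_)
      have hu0 : 0 < u := hx0.trans hu.1
      have hN : 0 ≤ 2 * v₁ + lam * u * (2 + lam * u) * (v₁ + v₂) := by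
        rw [hfact u]
        have h1 : (0:ℝ) ≤ -(v₁ + v₂) := by linarith
        have h2 : (0:ℝ) ≤ lam * (tM - u) := by nlinarith [hu.2]
        have h3 : (0:ℝ) ≤ 2 + lam * u + lam * tM := by nlinarith
        positivity
      positivity
    · refine le_of_deriv_nonpos hd1 htM h (fun u hu => ?_)
      have hu0 : 0 < tM := htM
      have hN : 2 * v₁ + lam * u * (2 + lam * u) * (v₁ + v₂) ≤ 0 := by
        rw [hfact u]
        have h1 : (0:ℝ) ≤ -(v₁ + v₂) := by linarith
        have h2 : lam * (tM - u) ≤ 0 := by nlinarith [hu.1]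
        have h3 : (0:ℝ) ≤ 2 + lam * u + lam * tM := by nlinarith [hu.1, htM]
        have := mul_nonneg h1 h3
        nlinarith
      have hden : (0:ℝ) < 2 * (1 + lam * u) ^ 2 := by
        have : 0 < u := htM.trans hu.1
        positivity
      exact div_nonpos_of_nonpos_of_nonneg
        (mul_nonpos_of_nonneg_of_nonpos (Real.exp_pos _).le hN) hden.le
  · -- case (ii): minimum for j = 2
    intro hv2p hv21
    have hc : 0 < v₁ + v₂ := by linarith
    have hcne : v₁ + v₂ ≠ 0 := hc.ne'
    set S := Real.sqrt (v₁ ^ 2 - v₂ ^ 2) with hSdef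
    set tm := -(1 / lam) * (1 - S / (v₁ + v₂)) with htmdef
    have hS2 : S ^ 2 = v₁ ^ 2 - v₂ ^ 2 := Real.sq_sqrt (by nlinarith)
    have hSgt : v₁ + v₂ < S := (Real.lt_sqrt (by linarith)).mpr (by nlinarith)
    have hSpos : 0 < S := by linarith
    have htm : 0 < tm := by
      have h' : 1 < S / (v₁ + v₂) := (one_lt_div hc).mpr hSgt
      have h2 : 1 - S / (v₁ + v₂) < 0 := by linarith
      have := mul_neg_of_pos_of_neg (by positivity : (0:ℝ) < 1 / lam) h2
      rw [htmdef, neg_mul]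
      linarith
    have h1m : 1 + lam * tm = S / (v₁ + v₂) := by
      rw [htmdef]
      field_simp
      ring
    have hsq : (1 + lam * tm) ^ 2 * (v₁ + v₂) ^ 2 = v₁ ^ 2 - v₂ ^ 2 := by
      rw [h1m]
      field_simp
      linarith [hS2]
    have hNm : 2 * v₂ + lam * tm * (2 + lam * tm) * (v₁ + v₂) = 0 := by
      have h0 : (2 * v₂ + lam * tm * (2 + lam * tm) * (v₁ + v₂)) * (v₁ + v₂) = 0 := by
        linear_combination hsq
      rcases mul_eq_zero.mp h0 with h | h
      · exact h
      · exact absurd h hcne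
    have hd2 : ∀ s : ℝ, 0 < s → HasDerivAt (fun u => Emom v₁ v₂ lam xi 2 u)
        (Real.exp (-(xi * s)) * (2 * v₂ + lam * s * (2 + lam * s) * (v₁ + v₂)) /
          (2 * (1 + lam * s) ^ 2)) s := by
      intro s hs
      have e : vel v₁ v₂ 2 = v₂ := by norm_num [vel]
      have := Emom_hasDerivAt v₁ v₂ lam xi hlam hxi 2 (Or.inr rfl) s hs
      rw [e] at this
      exact this
    have hfact : ∀ s : ℝ, 2 * v₂ + lam * s * (2 + lam * s) * (v₁ + v₂)
        = (v₁ + v₂) * (lam * (s - tm)) * (2 + lam * s + lam * tm) := by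
      intro s
      linear_combination hNm
    refine ⟨htm, ?_⟩
    rw [isMinOn_iff]
    intro x hx
    have hx0 : 0 < x := hx
    rcases le_total x tm with h | h
    · refine le_of_deriv_nonpos hd2 hx0 h (fun u hu => ?_)
      have hu0 : 0 < u := hx0.trans hu.1
      have hN : 2 * v₂ + lam * u * (2 + lam * u) * (v₁ + v₂) ≤ 0 := by
        rw [hfact u]
        have h2 : lam * (u - tm) ≤ 0 := by nlinarith [hu.2]
        have h3 : (0:ℝ) ≤ 2 + lam * u + lam * tm := by nlinarith
        nlinarith [mul_nonneg hc.le h3]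
      have hden : (0:ℝ) < 2 * (1 + lam * u) ^ 2 := by positivity
      exact div_nonpos_of_nonpos_of_nonneg
        (mul_nonpos_of_nonneg_of_nonpos (Real.exp_pos _).le hN) hden.le
    · refine le_of_deriv_nonneg hd2 htm h (fun u hu => ?_)
      have hu0 : 0 < u := htm.trans hu.1
      have hN : 0 ≤ 2 * v₂ + lam * u * (2 + lam * u) * (v₁ + v₂) := by
        rw [hfact u]
        have h2 : (0:ℝ) ≤ lam * (u - tm) := by nlinarith [hu.1]
        have h3 : (0:ℝ) ≤ 2 + lam * u + lam * tm := by nlinarith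
        positivity
      positivity

end TelegraphReset
end
end

section
/- (Corollary 5.5: large reset rate limit of the mean-square distance.) Fix t > 0, λ > 0 and j ∈ {1,2}, and regard E_j(t) and S_j(t) as functions of the reset rate ξ > 0. Then lim_{ξ→+∞} ( S_j(t) + m2_j(t) − 2·E_j(t)·m1_j(t) ) = m2_j(t) = t²·(3v_j² + λt(v₁² + v₁v₂ + v₂²))/(3(1+λt)); equivalently, lim_{ξ→+∞} E_j(t) = 0 and lim_{ξ→+∞} S_j(t) = 0, so that the mean-square distance Δ_j(ξ,t) between the reset and reset-free processes tends to the second moment of the reset-free process. -/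
open MeasureTheory Real Filter Topology Set

noncomputable section

namespace TelegraphReset

lemma hasDerivAt_neg_exp_neg (x : ℝ) :
    HasDerivAt (fun y : ℝ => -Real.exp (-y)) (Real.exp (-x)) x := by
  have h := ((Real.hasDerivAt_exp (-x)).comp x (hasDerivAt_neg x)).neg
  exact h.congr_deriv (by ring)

lemma integral_exp_neg (a b : ℝ) : ∫ x in a..b, Real.exp (-x) = Real.exp (-a) - Real.exp (-b) := by
  have h := intervalIntegral.integral_eq_sub_of_hasDerivAt
    (f := fun y : ℝ => -Real.exp (-y)) (f' := fun y : ℝ => Real.exp (-y))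
    (fun x _ => hasDerivAt_neg_exp_neg x)
    ((Real.continuous_exp.comp continuous_neg).intervalIntegrable a b)
  rw [h]; ring

lemma ibp (a b : ℝ) (ha : 0 < a) (hab : a ≤ b) :
    iGamma a b = Real.exp (-a) / a - Real.exp (-b) / b
      - ∫ x in a..b, (x ^ 2)⁻¹ * Real.exp (-x) := by
  have hsub : uIcc a b = Icc a b := uIcc_of_le hab
  have hne : ∀ x ∈ uIcc a b, x ≠ 0 := by
    intro x hx
    rw [hsub] at hx
    exact ne_of_gt (lt_of_lt_of_le ha hx.1)
  have hu : ∀ x ∈ uIcc a b, HasDerivAt (fun y : ℝ => y⁻¹) (-(x ^ 2)⁻¹) x :=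
    fun x hx => hasDerivAt_inv (hne x hx)
  have hv : ∀ x ∈ uIcc a b, HasDerivAt (fun y : ℝ => -Real.exp (-y)) (Real.exp (-x)) x :=
    fun x _ => hasDerivAt_neg_exp_neg x
  have hu' : IntervalIntegrable (fun x : ℝ => -(x ^ 2)⁻¹) volume a b := by
    apply ContinuousOn.intervalIntegrable
    exact (((continuous_pow 2).continuousOn).inv₀ (fun x hx => pow_ne_zero 2 (hne x hx))).neg
  have hv' : IntervalIntegrable (fun x : ℝ => Real.exp (-x)) volume a b :=
    (Real.continuous_exp.comp continuous_neg).intervalIntegrable a b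
  have h := intervalIntegral.integral_mul_deriv_eq_deriv_mul hu hv hu' hv'
  simp only [iGamma]
  rw [h]
  have : (∫ x in a..b, -(x ^ 2)⁻¹ * -Real.exp (-x)) = ∫ x in a..b, (x ^ 2)⁻¹ * Real.exp (-x) := by
    congr 1; funext x; ring
  rw [this]
  field_simp
  ring

lemma key (c : ℝ) (hc : 1 < c) :
    Tendsto (fun a : ℝ => a * Real.exp a * iGamma a (a * c)) atTop (𝓝 1) := by
  set R : ℝ → ℝ := fun a => ∫ x in a..(a * c), (x ^ 2)⁻¹ * Real.exp (-x) with hR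
  have hRb : ∀ a : ℝ, 0 < a → 0 ≤ R a ∧ a * Real.exp a * R a ≤ a⁻¹ := by
    intro a ha
    have hab : a ≤ a * c := le_mul_of_one_le_right ha.le hc.le
    have hRnn : 0 ≤ R a := by
      apply intervalIntegral.integral_nonneg hab
      intro x hx
      have hx0 : 0 < x := lt_of_lt_of_le ha hx.1
      positivity
    constructor
    · exact hRnn
    · have hle : R a ≤ (a ^ 2)⁻¹ * Real.exp (-a) := by
        have hmono : R a ≤ ∫ x in a..(a * c), (a ^ 2)⁻¹ * Real.exp (-x) := by
          apply intervalIntegral.integral_mono_on hab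
          · apply ContinuousOn.intervalIntegrable
            apply ContinuousOn.mul
            · exact ((continuous_pow 2).continuousOn).inv₀ (fun x hx => by
                rw [uIcc_of_le hab] at hx
                exact pow_ne_zero 2 (ne_of_gt (lt_of_lt_of_le ha hx.1)))
            · exact (Real.continuous_exp.comp continuous_neg).continuousOn
          · exact (Continuous.intervalIntegrable (by continuity) a (a * c))
          · intro x hx
            have hx0 : 0 < x := lt_of_lt_of_le ha hx.1
            have hinv : (x ^ 2)⁻¹ ≤ (a ^ 2)⁻¹ := by
              apply inv_anti₀ (by positivity)
              nlinarith [hx.1]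
            exact mul_le_mul_of_nonneg_right hinv (Real.exp_pos _).le
        have : (∫ x in a..(a * c), (a ^ 2)⁻¹ * Real.exp (-x))
            = (a ^ 2)⁻¹ * (Real.exp (-a) - Real.exp (-(a * c))) := by
          rw [intervalIntegral.integral_const_mul, integral_exp_neg]
        calc R a ≤ (a ^ 2)⁻¹ * (Real.exp (-a) - Real.exp (-(a * c))) := by rw [← this]; exact hmono
          _ ≤ (a ^ 2)⁻¹ * Real.exp (-a) := by
              have : 0 < Real.exp (-(a * c)) := Real.exp_pos _
              nlinarith [sq_nonneg a, inv_nonneg.mpr (sq_nonneg a)]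
      calc a * Real.exp a * R a ≤ a * Real.exp a * ((a ^ 2)⁻¹ * Real.exp (-a)) := by
            apply mul_le_mul_of_nonneg_left hle
            positivity
        _ = a⁻¹ := by
            have h1 : Real.exp a * Real.exp (-a) = 1 := by
              rw [← Real.exp_add]; simp
            have h2 : a * Real.exp a * ((a ^ 2)⁻¹ * Real.exp (-a))
                = (Real.exp a * Real.exp (-a)) * (a * (a ^ 2)⁻¹) := by ring
            rw [h2, h1, one_mul, sq]
            field_simp
  have hcongr : ∀ᶠ a in atTop, (1 - Real.exp (a - a * c) / c) - a * Real.exp a * R a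
      = a * Real.exp a * iGamma a (a * c) := by
    filter_upwards [eventually_gt_atTop (0 : ℝ)] with a ha
    have hab : a ≤ a * c := le_mul_of_one_le_right ha.le hc.le
    have hac : 0 < a * c := lt_of_lt_of_le ha hab
    rw [ibp a (a * c) ha hab]
    have h1 : Real.exp a * Real.exp (-a) = 1 := by rw [← Real.exp_add]; simp
    have h2 : Real.exp a * Real.exp (-(a * c)) = Real.exp (a - a * c) := by
      rw [← Real.exp_add]; ring_nf
    have h3 : a * Real.exp a * (Real.exp (-a) / a - Real.exp (-(a * c)) / (a * c) - R a)
        = (Real.exp a * Real.exp (-a)) * (a / a)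
          - (Real.exp a * Real.exp (-(a * c))) * (a / (a * c)) - a * Real.exp a * R a := by
      ring
    rw [h3, h1, h2, div_self ha.ne', show a / (a * c) = 1 / c by
      field_simp]
    ring
  have hX : Tendsto (fun a : ℝ => a - a * c) atTop atBot := by
    have h := tendsto_id.atTop_mul_const_of_neg (show (1 : ℝ) - c < 0 by linarith)
    have : (fun a : ℝ => id a * (1 - c)) = fun a : ℝ => a - a * c := by
      funext a; simp [id]; ring
    rwa [this] at h
  have hX2 : Tendsto (fun a : ℝ => Real.exp (a - a * c) / c) atTop (𝓝 0) := by
    have := (Real.tendsto_exp_atBot.comp hX).div_const c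
    simpa using this
  have hY : Tendsto (fun a : ℝ => a * Real.exp a * R a) atTop (𝓝 0) := by
    apply tendsto_of_tendsto_of_tendsto_of_le_of_le' tendsto_const_nhds tendsto_inv_atTop_zero
    · filter_upwards [eventually_gt_atTop (0 : ℝ)] with a ha
      exact mul_nonneg (mul_nonneg ha.le (Real.exp_pos a).le) (hRb a ha).1
    · filter_upwards [eventually_gt_atTop (0 : ℝ)] with a ha
      exact (hRb a ha).2
  have hfin := ((tendsto_const_nhds (α := ℝ) (x := (1 : ℝ))).sub hX2).sub hY
  have := hfin.congr' hcongr
  simpa using this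

lemma key2 (lam t : ℝ) (hlam : 0 < lam) (ht : 0 < t) :
    Tendsto (fun xi : ℝ => xi * Real.exp (xi / lam) *
      iGamma (xi / lam) (xi / lam * (1 + lam * t))) atTop (𝓝 lam) := by
  have hc : 1 < 1 + lam * t := by nlinarith
  have hdiv : Tendsto (fun xi : ℝ => xi / lam) atTop atTop :=
    tendsto_id.atTop_div_const hlam
  have h := ((key (1 + lam * t) hc).comp hdiv).const_mul lam
  have h2 := h.congr (f₂ := fun xi : ℝ => xi * Real.exp (xi / lam) *
      iGamma (xi / lam) (xi / lam * (1 + lam * t))) (by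
    intro xi
    simp only [Function.comp]
    field_simp)
  simpa using h2

lemma exp_neg_tendsto (t : ℝ) (ht : 0 < t) :
    Tendsto (fun xi : ℝ => Real.exp (-(xi * t))) atTop (𝓝 0) := by
  have h1 : Tendsto (fun xi : ℝ => xi * t) atTop atTop :=
    tendsto_id.atTop_mul_const ht
  exact Real.tendsto_exp_atBot.comp (tendsto_neg_atTop_atBot.comp h1)

lemma Emom_tendsto (v₁ v₂ lam t : ℝ) (hlam : 0 < lam) (ht : 0 < t) (j : ℕ) :
    Tendsto (fun xi => Emom v₁ v₂ lam xi j t) atTop (𝓝 0) := by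
  have hE := exp_neg_tendsto t ht
  have hK := key2 lam t hlam ht
  set D := vel v₁ v₂ j - vel v₁ v₂ (3 - j) with hD
  have hfrac : Tendsto (fun xi : ℝ => (v₁ + v₂) / (2 * xi)) atTop (𝓝 0) :=
    Tendsto.div_atTop tendsto_const_nhds (Tendsto.const_mul_atTop two_pos tendsto_id)
  have h1 : Tendsto (fun xi : ℝ =>
      (1 - Real.exp (-(xi * t))) * ((v₁ + v₂) / (2 * xi) + D / (2 * lam)))
      atTop (𝓝 ((1 - 0) * (0 + D / (2 * lam)))) :=
    ((tendsto_const_nhds (x := (1:ℝ))).sub hE).mul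
      (hfrac.add (tendsto_const_nhds (x := D / (2 * lam))))
  have h2 : Tendsto (fun xi : ℝ => xi * Real.exp (xi / lam) * D / (2 * lam ^ 2) *
      iGamma (xi / lam) (xi / lam * (1 + lam * t)))
      atTop (𝓝 (D / (2 * lam ^ 2) * lam)) :=
    (hK.const_mul (D / (2 * lam ^ 2))).congr (fun xi => by ring)
  have h3 : Tendsto (fun xi : ℝ =>
      t * Real.exp (-(xi * t)) * D / (2 * (1 + lam * t)))
      atTop (𝓝 (t * D / (2 * (1 + lam * t)) * 0)) :=
    (hE.const_mul (t * D / (2 * (1 + lam * t)))).congr (fun xi => by ring)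
  have htot := (h1.sub h2).add h3
  have h0 : (1 - 0) * (0 + D / (2 * lam)) - D / (2 * lam ^ 2) * lam
      + t * D / (2 * (1 + lam * t)) * 0 = 0 := by
    field_simp
    ring
  rw [h0] at htot
  exact htot.congr (fun xi => by simp only [Emom]; rfl)

lemma Smom_tendsto (v₁ v₂ lam t : ℝ) (hlam : 0 < lam) (ht : 0 < t) (j : ℕ) :
    Tendsto (fun xi => Smom v₁ v₂ lam xi j t) atTop (𝓝 0) := by
  have hE := exp_neg_tendsto t ht
  have hK := key2 lam t hlam ht
  set C := 2 * (v₁ ^ 2 + v₁ * v₂ + v₂ ^ 2) with hC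
  set D := 2 * vel v₁ v₂ j ^ 2 - v₁ * v₂ - vel v₁ v₂ (3 - j) ^ 2 with hD
  have hsq : Tendsto (fun xi : ℝ => C / (3 * xi ^ 2)) atTop (𝓝 0) :=
    Tendsto.div_atTop tendsto_const_nhds
      (Tendsto.const_mul_atTop (by norm_num) (tendsto_pow_atTop two_ne_zero))
  have hinv : Tendsto (fun xi : ℝ => 1 / xi) atTop (𝓝 0) :=
    Tendsto.div_atTop tendsto_const_nhds tendsto_id
  have hlin : Tendsto (fun xi : ℝ => C / (3 * xi)) atTop (𝓝 0) :=
    Tendsto.div_atTop tendsto_const_nhds (Tendsto.const_mul_atTop (by norm_num) tendsto_id)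
  have h1 : Tendsto (fun xi : ℝ =>
      (1 - Real.exp (-(xi * t))) * (C / (3 * xi ^ 2) + D / (3 * lam) * (1 / xi - 1 / lam)))
      atTop (𝓝 ((1 - 0) * (0 + D / (3 * lam) * (0 - 1 / lam)))) :=
    ((tendsto_const_nhds (x := (1:ℝ))).sub hE).mul
      (hsq.add ((hinv.sub (tendsto_const_nhds (x := 1 / lam))).const_mul (D / (3 * lam))))
  have h2 : Tendsto (fun xi : ℝ =>
      t * Real.exp (-(xi * t)) * (C / (3 * xi) + D / (3 * lam * (1 + lam * t))))
      atTop (𝓝 ((t * 0) * (0 + D / (3 * lam * (1 + lam * t))))) :=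
    ((tendsto_const_nhds (x := t)).mul hE).mul
      (hlin.add (tendsto_const_nhds (x := D / (3 * lam * (1 + lam * t)))))
  have h3 : Tendsto (fun xi : ℝ => xi * Real.exp (xi / lam) * D / (3 * lam ^ 3) *
      iGamma (xi / lam) (xi / lam * (1 + lam * t)))
      atTop (𝓝 (D / (3 * lam ^ 3) * lam)) :=
    (hK.const_mul (D / (3 * lam ^ 3))).congr (fun xi => by ring)
  have htot := (h1.sub h2).add h3
  have h0 : (1 - 0) * (0 + D / (3 * lam) * (0 - 1 / lam))
      - (t * 0) * (0 + D / (3 * lam * (1 + lam * t))) + D / (3 * lam ^ 3) * lam = 0 := by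
    field_simp
    ring
  rw [h0] at htot
  exact htot.congr (fun xi => by simp only [Smom]; rfl)

/-- Corollary 5.5: as the reset rate `ξ → ∞`, the mean-square distance tends
to the second moment of the reset-free process; equivalently, both moments of
the reset process tend to `0`. -/
theorem large_reset_rate (v₁ v₂ lam t : ℝ) (hlam : 0 < lam) (ht : 0 < t)
    (hv : v₂ < v₁) (hv1 : v₁ ≠ 0) (hv2 : v₂ ≠ 0) :
    ∀ j : ℕ, (j = 1 ∨ j = 2) →
      Tendsto (fun xi => Smom v₁ v₂ lam xi j t + m2 v₁ v₂ lam j t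
          - 2 * Emom v₁ v₂ lam xi j t * m1 v₁ v₂ lam j t) atTop
        (𝓝 (m2 v₁ v₂ lam j t))
      ∧ m2 v₁ v₂ lam j t
          = t ^ 2 * (3 * vel v₁ v₂ j ^ 2 + lam * t * (v₁ ^ 2 + v₁ * v₂ + v₂ ^ 2)) /
              (3 * (1 + lam * t))
      ∧ Tendsto (fun xi => Emom v₁ v₂ lam xi j t) atTop (𝓝 0)
      ∧ Tendsto (fun xi => Smom v₁ v₂ lam xi j t) atTop (𝓝 0) := by
  intro j hj
  have hE := Emom_tendsto v₁ v₂ lam t hlam ht j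
  have hS := Smom_tendsto v₁ v₂ lam t hlam ht j
  refine ⟨?_, rfl, hE, hS⟩
  have h := (hS.add (tendsto_const_nhds (x := m2 v₁ v₂ lam j t))).sub
    ((hE.const_mul (2 : ℝ)).mul_const (m1 v₁ v₂ lam j t))
  simpa using h

end TelegraphReset
end
end
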